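/- arXiv:1804.05829 — 4 statements merged into one kernel-verified Lean document; each statement's English description precedes it below -/
import Mathlib

section
/- Let n, d, ℓ be integers with 0 ≤ ℓ < d ≤ ⌊(n+ℓ−1)/2⌋. Then the graph H_{n,d,ℓ} is not ℓ-hamiltonian: more precisely, no linear forest F with ℓ edges contained in G[B] (the clique on the common neighborhood B) can be extended to a hamiltonian cycle of H_{n,d,ℓ}. -/
open SimpleGraph

/-- A linear forest: an acyclic graph with maximum degree at most 2. -/
def SimpleGraph.IsLinearForest {V : Type*} (F : SimpleGraph V) : Prop :=
  F.IsAcyclic ∧ ∀ v a b c : V, F.Adj v a → F.Adj v b → F.Adj v c → a = b ∨ a = c ∨ b = c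

/-- A graph is `ℓ`-hamiltonian if every linear forest with `ℓ` edges contained in it
extends to a hamiltonian cycle. -/
def SimpleGraph.IsLHamiltonian {V : Type*} [DecidableEq V] (G : SimpleGraph V) (ℓ : ℕ) : Prop :=
  ∀ F : SimpleGraph V, F ≤ G → F.IsLinearForest → F.edgeSet.ncard = ℓ →
    ∃ (v : V) (c : G.Walk v v), c.IsHamiltonianCycle ∧ ∀ e ∈ F.edgeSet, e ∈ c.edges

/-- The graph `H_{n,d,ℓ}`: a complete graph on `A = {0, …, n-d+ℓ-1}` together with `d-ℓ`
further vertices, each adjacent to the set `B = {0, …, d-1} ⊆ A`. -/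
def Hgraph (n d ℓ : ℕ) : SimpleGraph (Fin n) where
  Adj u v := u ≠ v ∧ ((u.val < n - d + ℓ ∧ v.val < n - d + ℓ) ∨
    (u.val < d ∧ n - d + ℓ ≤ v.val) ∨ (v.val < d ∧ n - d + ℓ ≤ u.val))
  symm := by constructor; intro u v h; exact ⟨h.1.symm, by tauto⟩
  loopless := by constructor; intro v h; exact h.1 rfl

/-- The graph `H'_{n,d,ℓ}`: a complete graph on `{0, …, n-d+ℓ-1}` and a complete graph on
`{n-d-1, …, n-1}` sharing `ℓ+1` vertices. -/
def H'graph (n d ℓ : ℕ) : SimpleGraph (Fin n) where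
  Adj u v := u ≠ v ∧ ((u.val < n - d + ℓ ∧ v.val < n - d + ℓ) ∨
    (n - d - 1 ≤ u.val ∧ n - d - 1 ≤ v.val))
  symm := by constructor; intro u v h; exact ⟨h.1.symm, by tauto⟩
  loopless := by constructor; intro v h; exact h.1 rfl

/-- `h_r(n,d,ℓ) = C(n-d+ℓ, r) + (d-ℓ) C(d, r-1)`. -/
def hrfun (n d r ℓ : ℕ) : ℕ := Nat.choose (n - d + ℓ) r + (d - ℓ) * Nat.choose d (r - 1)

/-- `h(n,d,ℓ) = C(n-d+ℓ, 2) + (d-ℓ) d`. -/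
def hfun (n d ℓ : ℕ) : ℕ := Nat.choose (n - d + ℓ) 2 + (d - ℓ) * d

/-- The number of `r`-cliques of `G`. -/
noncomputable def cliqueCount {V : Type*} (G : SimpleGraph V) (r : ℕ) : ℕ :=
  {s : Finset V | G.IsNClique r s}.ncard

/-- `G` is `ℓ`-saturated: not `ℓ`-hamiltonian, but adding any edge makes it `ℓ`-hamiltonian. -/
def SimpleGraph.IsLSaturated {V : Type*} [DecidableEq V] (G : SimpleGraph V) (ℓ : ℕ) : Prop :=
  ¬ G.IsLHamiltonian ℓ ∧
    ∀ u v : V, u ≠ v → ¬ G.Adj u v → (G ⊔ SimpleGraph.edge u v).IsLHamiltonian ℓ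

/-- Auxiliary: a walk preserves a vertex-invariant. -/
lemma aux_walk_invariant {V : Type*} {H : SimpleGraph V} (P : V → Prop)
    (h : ∀ a b : V, H.Adj a b → (P a ↔ P b)) {u v : V} (p : H.Walk u v) : P u ↔ P v := by
  induction p with
  | nil => exact Iff.rfl
  | cons h' _ ih => exact (h _ _ h').trans ih

/-- The path `0 - 1 - ⋯ - ℓ` inside `Fin n`. -/
def pathF (n ℓ : ℕ) : SimpleGraph (Fin n) where
  Adj u v := u.val ≤ ℓ ∧ v.val ≤ ℓ ∧ (u.val + 1 = v.val ∨ v.val + 1 = u.val)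
  symm := by constructor; rintro u v ⟨h1, h2, h3⟩; exact ⟨h2, h1, h3.symm⟩
  loopless := by constructor; rintro v ⟨_, _, h⟩; omega

lemma pathF_not_reachable {n ℓ : ℕ} {u v : Fin n} (huv : u.val + 1 = v.val)
    (hu : u.val ≤ ℓ) (hv : v.val ≤ ℓ) :
    ¬ (pathF n ℓ \ SimpleGraph.fromEdgeSet {s(u, v)}).Reachable u v := by
  intro hr
  obtain ⟨p⟩ := hr
  have key := aux_walk_invariant (fun x : Fin n => x.val ≤ u.val) ?_ p
  · omega
  · intro a b hab
    rw [sdiff_adj, fromEdgeSet_adj] at hab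
    obtain ⟨⟨ha, hb, hor⟩, hne⟩ := hab
    have hne' : s(a, b) ≠ s(u, v) := by
      intro h
      exact hne ⟨Set.mem_singleton_iff.mpr h, by rintro rfl; omega⟩
    constructor
    · intro h
      by_contra hcb
      rcases hor with h1 | h1
      · have hau : a = u := Fin.ext (by omega)
        have hbv : b = v := Fin.ext (by omega)
        exact hne' (by rw [hau, hbv])
      · omega
    · intro h
      by_contra hca
      rcases hor with h1 | h1
      · omega
      · have hbu : b = u := Fin.ext (by omega)
        have hav : a = v := Fin.ext (by omega)
        exact hne' (by rw [hbu, hav, Sym2.eq_swap])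

lemma pathF_isAcyclic (n ℓ : ℕ) : (pathF n ℓ).IsAcyclic := by
  rw [isAcyclic_iff_forall_adj_isBridge]
  intro u v huv
  rw [isBridge_iff]
  obtain ⟨hu, hv, h | h⟩ := huv
  · exact pathF_not_reachable h hu hv
  · rw [Sym2.eq_swap (a := u) (b := v)]
    intro hr
    exact pathF_not_reachable h hv hu hr.symm


lemma pathF_edgeSet_ncard (n ℓ : ℕ) (hℓ : ℓ + 1 < n) :
    (pathF n ℓ).edgeSet.ncard = ℓ := by
  classical
  let f : {i // i ∈ Finset.range ℓ} → Sym2 (Fin n) := fun i =>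
    s((⟨i.1, by have := Finset.mem_range.mp i.2; omega⟩ : Fin n),
      (⟨i.1 + 1, by have := Finset.mem_range.mp i.2; omega⟩ : Fin n))
  have hset : (pathF n ℓ).edgeSet = ↑((Finset.range ℓ).attach.image f) := by
    ext e
    induction e using Sym2.ind with
    | _ a b =>
      simp only [mem_edgeSet, Finset.coe_image, Set.mem_image, Finset.mem_coe,
        Finset.mem_attach, true_and]
      constructor
      · rintro ⟨ha, hb, h | h⟩
        · refine ⟨⟨a.val, Finset.mem_range.mpr (by omega)⟩, ?_⟩
          show s(_, _) = s(a, b)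
          rw [Sym2.eq_iff]
          exact Or.inl ⟨Fin.ext rfl, Fin.ext (by simpa using h)⟩
        · refine ⟨⟨b.val, Finset.mem_range.mpr (by omega)⟩, ?_⟩
          show s(_, _) = s(a, b)
          rw [Sym2.eq_iff]
          exact Or.inr ⟨Fin.ext rfl, Fin.ext (by simpa using h)⟩
      · rintro ⟨i, hi⟩
        have hir := Finset.mem_range.mp i.2
        rw [show f i = s((⟨i.1, by omega⟩ : Fin n), (⟨i.1 + 1, by omega⟩ : Fin n)) from rfl,
          Sym2.eq_iff] at hi
        show a.val ≤ ℓ ∧ b.val ≤ ℓ ∧ (a.val + 1 = b.val ∨ b.val + 1 = a.val)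
        rcases hi with ⟨h1, h2⟩ | ⟨h1, h2⟩ <;>
          rw [← h1, ← h2] <;> simp <;> omega
  rw [hset, Set.ncard_coe_finset, Finset.card_image_of_injOn, Finset.card_attach,
    Finset.card_range]
  intro i _ j _ hij
  rw [show f i = s((⟨i.1, by have := Finset.mem_range.mp i.2; omega⟩ : Fin n),
        (⟨i.1 + 1, by have := Finset.mem_range.mp i.2; omega⟩ : Fin n)) from rfl,
      show f j = s((⟨j.1, by have := Finset.mem_range.mp j.2; omega⟩ : Fin n),
        (⟨j.1 + 1, by have := Finset.mem_range.mp j.2; omega⟩ : Fin n)) from rfl,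
      Sym2.eq_iff] at hij
  simp only [Fin.mk.injEq] at hij
  apply Subtype.ext
  omega

lemma aux_card_filter_val_lt (n k : ℕ) (hk : k ≤ n) :
    (Finset.univ.filter (fun x : Fin n => x.val < k)).card = k := by
  classical
  have hset : Finset.univ.filter (fun x : Fin n => x.val < k)
      = Finset.map (Fin.castLEEmb hk) Finset.univ := by
    ext x
    simp only [Finset.mem_filter, Finset.mem_univ, true_and, Finset.mem_map,
      Fin.castLEEmb_apply]
    constructor
    · intro hx
      exact ⟨⟨x.val, hx⟩, Fin.ext rfl⟩
    · rintro ⟨y, -, rfl⟩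
      exact y.isLt
  rw [hset]
  simp

lemma aux_main {n d ℓ : ℕ} (hld : ℓ < d) (hd : d ≤ (n + ℓ - 1) / 2)
    (F : SimpleGraph (Fin n)) (hcard : F.edgeSet.ncard = ℓ)
    (hsupp : ∀ x ∈ F.support, x.val < d) (v : Fin n) (c : (Hgraph n d ℓ).Walk v v)
    (hc : c.IsHamiltonianCycle) (hFe : ∀ e ∈ F.edgeSet, e ∈ c.edges) : False := by
  classical
  set m := n - d + ℓ with hm
  have h2d : d * 2 ≤ n + ℓ - 1 := (Nat.le_div_iff_mul_le two_pos).mp hd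
  have hdm : d < m := by omega
  have hmn : m < n := by omega
  -- basic facts about darts of the hamiltonian cycle
  have hnodup : c.darts.Nodup :=
    List.Nodup.of_map _ hc.isCycle.isCircuit.isTrail.edges_nodup
  have htail : ∀ x : Fin n, c.support.tail.count x = 1 := by
    intro x
    have h1 := hc.isHamiltonian_tail x
    rwa [SimpleGraph.Walk.support_tail_of_not_nil c hc.isCycle.not_nil] at h1
  have hsndcount : ∀ x : Fin n, (c.darts.map (fun dt => dt.snd)).count x = 1 := by
    intro x; rw [SimpleGraph.Walk.map_snd_darts]; exact htail x
  have hfstcount : ∀ x : Fin n, (c.darts.map (fun dt => dt.fst)).count x = 1 := by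
    intro x
    have h1 : List.count x (c.darts.map (fun dt => dt.fst)) + List.count x [v]
        = List.count x (v :: c.support.tail) := by
      rw [← List.count_append, SimpleGraph.Walk.map_fst_darts_append, ← c.support_eq_cons]
    by_cases hxv : x = v <;>
      simp only [List.count_cons, List.count_nil, List.count_singleton, htail x, hxv,
        beq_self_eq_true, if_true, beq_iff_eq] at h1 <;>
      simp_all <;> omega
  have hfst_inj : ∀ d1 ∈ c.darts, ∀ d2 ∈ c.darts, d1.fst = d2.fst → d1 = d2 :=
    List.inj_on_of_nodup_map
      (List.nodup_iff_count_le_one.mpr (fun x => (hfstcount x).le))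
  have hsnd_inj : ∀ d1 ∈ c.darts, ∀ d2 ∈ c.darts, d1.snd = d2.snd → d1 = d2 :=
    List.inj_on_of_nodup_map
      (List.nodup_iff_count_le_one.mpr (fun x => (hsndcount x).le))
  have hfst_ex : ∀ x : Fin n, ∃ dt ∈ c.darts, dt.fst = x := by
    intro x
    have h1 : x ∈ c.darts.map (fun dt => dt.fst) :=
      List.count_pos_iff.mp (by rw [hfstcount x]; norm_num)
    simpa using h1
  have hsnd_ex : ∀ x : Fin n, ∃ dt ∈ c.darts, dt.snd = x := by
    intro x
    have h1 : x ∈ c.darts.map (fun dt => dt.snd) :=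
      List.count_pos_iff.mp (by rw [hsndcount x]; norm_num)
    simpa using h1
  set D := c.darts.toFinset with hD
  -- the filter on the first coordinate has cardinality d, and similarly for the second
  have himgf : (D.filter fun dt => dt.fst.val < d).image (fun dt => dt.fst)
      = Finset.univ.filter (fun x : Fin n => x.val < d) := by
    ext x
    simp only [Finset.mem_image, Finset.mem_filter, Finset.mem_univ, true_and,
      List.mem_toFinset, hD]
    constructor
    · rintro ⟨dt, ⟨-, hlt⟩, rfl⟩; exact hlt
    · intro hx
      obtain ⟨dt, hdt, rfl⟩ := hfst_ex x
      exact ⟨dt, ⟨hdt, hx⟩, rfl⟩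
  have himgs : (D.filter fun dt => dt.snd.val < d).image (fun dt => dt.snd)
      = Finset.univ.filter (fun x : Fin n => x.val < d) := by
    ext x
    simp only [Finset.mem_image, Finset.mem_filter, Finset.mem_univ, true_and,
      List.mem_toFinset, hD]
    constructor
    · rintro ⟨dt, ⟨-, hlt⟩, rfl⟩; exact hlt
    · intro hx
      obtain ⟨dt, hdt, rfl⟩ := hsnd_ex x
      exact ⟨dt, ⟨hdt, hx⟩, rfl⟩
  have hfstd : (D.filter fun dt => dt.fst.val < d).card = d := by
    rw [← Finset.card_image_of_injOn (fun d1 h1 d2 h2 h =>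
      hfst_inj d1 (List.mem_toFinset.mp (Finset.mem_filter.mp h1).1)
        d2 (List.mem_toFinset.mp (Finset.mem_filter.mp h2).1) h), himgf]
    exact aux_card_filter_val_lt n d (by omega)
  have hsndd : (D.filter fun dt => dt.snd.val < d).card = d := by
    rw [← Finset.card_image_of_injOn (fun d1 h1 d2 h2 h =>
      hsnd_inj d1 (List.mem_toFinset.mp (Finset.mem_filter.mp h1).1)
        d2 (List.mem_toFinset.mp (Finset.mem_filter.mp h2).1) h), himgs]
    exact aux_card_filter_val_lt n d (by omega)
  -- split the counts according to the other endpoint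
  have hsplit1 : (D.filter fun dt => dt.fst.val < d ∧ dt.snd.val < d).card
      + (D.filter fun dt => dt.fst.val < d ∧ ¬ dt.snd.val < d).card = d := by
    have h1 := Finset.card_filter_add_card_filter_not
      (s := D.filter (fun dt => dt.fst.val < d)) (p := fun dt => dt.snd.val < d)
    rw [Finset.filter_filter, Finset.filter_filter] at h1
    rwa [hfstd] at h1
  have hsplit2 : (D.filter fun dt => dt.snd.val < d ∧ dt.fst.val < d).card
      + (D.filter fun dt => dt.snd.val < d ∧ ¬ dt.fst.val < d).card = d := by
    have h1 := Finset.card_filter_add_card_filter_not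
      (s := D.filter (fun dt => dt.snd.val < d)) (p := fun dt => dt.fst.val < d)
    rw [Finset.filter_filter, Finset.filter_filter] at h1
    rwa [hsndd] at h1
  -- the edges of F give at least ℓ darts with both endpoints in B
  have hEF := Set.toFinite F.edgeSet
  have hsurjF : Set.SurjOn (fun dt : (Hgraph n d ℓ).Dart => dt.edge)
      ↑(D.filter fun dt => dt.fst.val < d ∧ dt.snd.val < d) ↑(hEF.toFinset) := by
    intro e he
    rw [Finset.mem_coe, Set.Finite.mem_toFinset] at he
    have he2 : e ∈ c.edges := hFe e he
    rw [show c.edges = c.darts.map (fun dt => dt.edge) from rfl] at he2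
    obtain ⟨dt, hdt, rfl⟩ := List.mem_map.mp he2
    have hadj : F.Adj dt.fst dt.snd := by
      rw [← SimpleGraph.mem_edgeSet]
      exact he
    refine Set.mem_image_of_mem _ ?_
    rw [Finset.mem_coe, Finset.mem_filter]
    exact ⟨List.mem_toFinset.mpr hdt,
      hsupp _ ((SimpleGraph.mem_support F).mpr ⟨_, hadj⟩),
      hsupp _ ((SimpleGraph.mem_support F).mpr ⟨_, hadj.symm⟩)⟩
  have hn1 : ℓ ≤ (D.filter fun dt => dt.fst.val < d ∧ dt.snd.val < d).card := by
    have h1 := Finset.card_le_card_of_surjOn _ hsurjF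
    rwa [← Set.ncard_eq_toFinset_card _ hEF, hcard] at h1
  have hn1' : ℓ ≤ (D.filter fun dt => dt.snd.val < d ∧ dt.fst.val < d).card := by
    rw [Finset.filter_congr (fun x _ => by exact and_comm)]
    exact hn1
  -- the extra vertices give at least d - ℓ darts from B to S (and from S to B)
  have hScard : (Finset.univ.filter (fun x : Fin n => m ≤ x.val)).card = d - ℓ := by
    have h1 := Finset.card_filter_add_card_filter_not
      (s := (Finset.univ : Finset (Fin n))) (p := fun x : Fin n => x.val < m)
    rw [aux_card_filter_val_lt n m (by omega)] at h1
    have h2 : (Finset.univ.filter (fun x : Fin n => ¬ x.val < m))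
        = Finset.univ.filter (fun x : Fin n => m ≤ x.val) :=
      Finset.filter_congr (fun x _ => by simp [Nat.not_lt])
    rw [h2] at h1
    simp only [Finset.card_univ, Fintype.card_fin] at h1
    omega
  have hsurj2 : Set.SurjOn (fun dt : (Hgraph n d ℓ).Dart => dt.snd)
      ↑(D.filter fun dt => dt.fst.val < d ∧ m ≤ dt.snd.val)
      ↑(Finset.univ.filter (fun x : Fin n => m ≤ x.val)) := by
    intro x hx
    rw [Finset.mem_coe, Finset.mem_filter] at hx
    obtain ⟨dt, hdt, rfl⟩ := hsnd_ex x
    refine Set.mem_image_of_mem _ ?_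
    rw [Finset.mem_coe, Finset.mem_filter]
    obtain ⟨-, h | h | h⟩ := dt.adj
    · omega
    · exact ⟨List.mem_toFinset.mpr hdt, h.1, hx.2⟩
    · omega
  have hsurj3 : Set.SurjOn (fun dt : (Hgraph n d ℓ).Dart => dt.fst)
      ↑(D.filter fun dt => dt.snd.val < d ∧ m ≤ dt.fst.val)
      ↑(Finset.univ.filter (fun x : Fin n => m ≤ x.val)) := by
    intro x hx
    rw [Finset.mem_coe, Finset.mem_filter] at hx
    obtain ⟨dt, hdt, rfl⟩ := hfst_ex x
    refine Set.mem_image_of_mem _ ?_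
    rw [Finset.mem_coe, Finset.mem_filter]
    obtain ⟨-, h | h | h⟩ := dt.adj
    · omega
    · omega
    · exact ⟨List.mem_toFinset.mpr hdt, h.1, hx.2⟩
  have hc2 : d - ℓ ≤ (D.filter fun dt => dt.fst.val < d ∧ m ≤ dt.snd.val).card := by
    have := Finset.card_le_card_of_surjOn _ hsurj2
    omega
  have hc3 : d - ℓ ≤ (D.filter fun dt => dt.snd.val < d ∧ m ≤ dt.fst.val).card := by
    have := Finset.card_le_card_of_surjOn _ hsurj3
    omega
  -- hence the two finsets coincide
  have heq2 : (D.filter fun dt => dt.fst.val < d ∧ ¬ dt.snd.val < d)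
      = (D.filter fun dt => dt.fst.val < d ∧ m ≤ dt.snd.val) := by
    refine (Finset.eq_of_subset_of_card_le ?_ ?_).symm
    · intro dt hdt
      rw [Finset.mem_filter] at hdt ⊢
      exact ⟨hdt.1, hdt.2.1, by omega⟩
    · omega
  have heq3 : (D.filter fun dt => dt.snd.val < d ∧ ¬ dt.fst.val < d)
      = (D.filter fun dt => dt.snd.val < d ∧ m ≤ dt.fst.val) := by
    refine (Finset.eq_of_subset_of_card_le ?_ ?_).symm
    · intro dt hdt
      rw [Finset.mem_filter] at hdt ⊢
      exact ⟨hdt.1, hdt.2.1, by omega⟩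
    · omega
  have hkey2 : ∀ dt ∈ c.darts, dt.fst.val < d → ¬ dt.snd.val < d → m ≤ dt.snd.val := by
    intro dt h1 h2 h3
    have h4 : dt ∈ D.filter fun dt => dt.fst.val < d ∧ ¬ dt.snd.val < d :=
      Finset.mem_filter.mpr ⟨List.mem_toFinset.mpr h1, h2, h3⟩
    rw [heq2] at h4
    exact (Finset.mem_filter.mp h4).2.2
  have hkey3 : ∀ dt ∈ c.darts, dt.snd.val < d → ¬ dt.fst.val < d → m ≤ dt.fst.val := by
    intro dt h1 h2 h3
    have h4 : dt ∈ D.filter fun dt => dt.snd.val < d ∧ ¬ dt.fst.val < d :=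
      Finset.mem_filter.mpr ⟨List.mem_toFinset.mpr h1, h2, h3⟩
    rw [heq3] at h4
    exact (Finset.mem_filter.mp h4).2.2
  -- the boundary argument
  set T : Set (Fin n) := {x : Fin n | x.val < d ∨ m ≤ x.val} with hT
  have hbd : ∀ dt ∈ c.darts, dt.fst ∈ T → dt.snd ∈ T := by
    intro dt hdt h1
    have h1' : dt.fst.val < d ∨ m ≤ dt.fst.val := h1
    show dt.snd.val < d ∨ m ≤ dt.snd.val
    rcases h1' with h1' | h1'
    · by_cases h2 : dt.snd.val < d
      · exact Or.inl h2
      · exact Or.inr (hkey2 dt hdt h1' h2)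
    · obtain ⟨-, h | h | h⟩ := dt.adj
      · exact absurd h.1 (by omega)
      · exact absurd h.1 (by omega)
      · exact Or.inl h.1
  have hbd' : ∀ dt ∈ c.darts, dt.snd ∈ T → dt.fst ∈ T := by
    intro dt hdt h1
    have h1' : dt.snd.val < d ∨ m ≤ dt.snd.val := h1
    show dt.fst.val < d ∨ m ≤ dt.fst.val
    rcases h1' with h1' | h1'
    · by_cases h2 : dt.fst.val < d
      · exact Or.inl h2
      · exact Or.inr (hkey3 dt hdt h1' h2)
    · obtain ⟨-, h | h | h⟩ := dt.adj
      · exact absurd h.2 (by omega)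
      · exact Or.inl h.1
      · exact absurd h.1 (by omega)
  have hw : (⟨d, by omega⟩ : Fin n) ∉ T := by
    simp only [hT, Set.mem_setOf_eq]
    omega
  have hb0 : (⟨0, by omega⟩ : Fin n) ∈ T := by
    simp only [hT, Set.mem_setOf_eq]
    omega
  by_cases hv : v ∈ T
  · have hws : (⟨d, by omega⟩ : Fin n) ∈ c.support := hc.mem_support _
    obtain ⟨dt, hdtq, h1, h2⟩ := (c.takeUntil _ hws).exists_boundary_dart T hv hw
    exact h2 (hbd dt (c.darts_takeUntil_subset hws hdtq) h1)
  · have hbs : (⟨0, by omega⟩ : Fin n) ∈ c.support := hc.mem_support _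
    obtain ⟨dt, hdtq, h1, h2⟩ := (c.takeUntil _ hbs).exists_boundary_dart Tᶜ hv (by simpa using hb0)
    exact h1 (hbd' dt (c.darts_takeUntil_subset hbs hdtq) (by simpa using h2))

/-- `H_{n,d,ℓ}` is not `ℓ`-hamiltonian; more precisely, no linear forest with `ℓ` edges contained
in the clique on `B = {0,…,d-1}` extends to a hamiltonian cycle of `H_{n,d,ℓ}`. -/
theorem Hgraph_not_lHamiltonian {n d ℓ : ℕ} (hld : ℓ < d) (hd : d ≤ (n + ℓ - 1) / 2) :
    ¬ (Hgraph n d ℓ).IsLHamiltonian ℓ ∧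
    ∀ F : SimpleGraph (Fin n), F ≤ Hgraph n d ℓ → F.IsLinearForest → F.edgeSet.ncard = ℓ →
      (∀ v ∈ F.support, v.val < d) →
      ¬ ∃ (v : Fin n) (c : (Hgraph n d ℓ).Walk v v), c.IsHamiltonianCycle ∧
          ∀ e ∈ F.edgeSet, e ∈ c.edges := by
    classical
  have h2d : d * 2 ≤ n + ℓ - 1 := (Nat.le_div_iff_mul_le two_pos).mp hd
  have part2 : ∀ F : SimpleGraph (Fin n), F ≤ Hgraph n d ℓ → F.IsLinearForest →
      F.edgeSet.ncard = ℓ → (∀ v ∈ F.support, v.val < d) →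
      ¬ ∃ (v : Fin n) (c : (Hgraph n d ℓ).Walk v v), c.IsHamiltonianCycle ∧
          ∀ e ∈ F.edgeSet, e ∈ c.edges := by
    rintro F - - hcard hsupp ⟨v, c, hc, hFe⟩
    exact aux_main hld hd F hcard hsupp v c hc hFe
  refine ⟨?_, part2⟩
  intro hHam
  have hlin : (pathF n ℓ).IsLinearForest := by
    refine ⟨pathF_isAcyclic n ℓ, ?_⟩
    rintro x a b c ⟨-, -, ha⟩ ⟨-, -, hb⟩ ⟨-, -, hc⟩
    have h1 : a.val = b.val ∨ a.val = c.val ∨ b.val = c.val := by omega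
    rcases h1 with h | h | h
    · exact Or.inl (Fin.ext h)
    · exact Or.inr (Or.inl (Fin.ext h))
    · exact Or.inr (Or.inr (Fin.ext h))
  have hle : pathF n ℓ ≤ Hgraph n d ℓ := by
    rintro u w ⟨hu, hw, hor⟩
    exact ⟨by rintro rfl; omega, Or.inl ⟨by omega, by omega⟩⟩
  have hsupp : ∀ x ∈ (pathF n ℓ).support, x.val < d := by
    intro x hx
    obtain ⟨y, h1, -, -⟩ := (SimpleGraph.mem_support _).mp hx
    omega
  have hcard : (pathF n ℓ).edgeSet.ncard = ℓ := pathF_edgeSet_ncard n ℓ (by omega)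
  obtain ⟨v, c, hc, hFe⟩ := hHam (pathF n ℓ) hle hlin hcard
  exact part2 (pathF n ℓ) hle hlin hcard hsupp ⟨v, c, hc, hFe⟩
end

section
/- Let n, d, ℓ be integers with 0 ≤ ℓ < d ≤ ⌊(n+ℓ−1)/2⌋. Then the graph H′_{n,d,ℓ} is not ℓ-hamiltonian: more precisely, no path with ℓ edges spanning the ℓ+1 dominating vertices (the identified vertices) of H′_{n,d,ℓ} can be extended to a hamiltonian cycle of H′_{n,d,ℓ}. -/
open SimpleGraph

set_option linter.unusedSectionVars false
set_option maxHeartbeats 1000000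


section AuxWalk

variable {V : Type*} [DecidableEq V] {G : SimpleGraph V}

lemma walk_snd_edge_mem {u v : V} {p : G.Walk u v} (hp : ¬ p.Nil) :
    s(u, p.getVert 1) ∈ p.edges := by
  cases p with
  | nil => exact absurd Walk.Nil.nil hp
  | cons h q => simp

lemma path_start_unique {u v w : V} {p : G.Walk u v} (hp : p.IsPath)
    (hw : s(u, w) ∈ p.edges) : w = p.getVert 1 := by
  cases p with
  | nil => simp at hw
  | cons h q =>
    rw [Walk.edges_cons, List.mem_cons] at hw
    rcases hw with hw | hw
    · rw [Sym2.eq_iff] at hw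
      rcases hw with ⟨-, rfl⟩ | ⟨h1, rfl⟩
      · simp
      · exact absurd h1 h.ne
    · exact absurd (Walk.fst_mem_support_of_mem_edges q hw)
        ((Walk.cons_isPath_iff h q).mp hp).2

lemma path_end_unique {u v w : V} {p : G.Walk u v} (hp : p.IsPath)
    (hw : s(v, w) ∈ p.edges) : w = p.reverse.getVert 1 := by
  apply path_start_unique hp.reverse
  rwa [Walk.edges_reverse, List.mem_reverse]

lemma cycle_start_neighbors {v : V} {c : G.Walk v v} (hc : c.IsCycle) :
    ∃ a b : V, a ≠ b ∧ s(v, a) ∈ c.edges ∧ s(v, b) ∈ c.edges ∧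
      ∀ w, s(v, w) ∈ c.edges → w = a ∨ w = b := by
  have hcn : ¬ c.Nil := hc.not_nil
  rw [Walk.not_nil_iff] at hcn
  obtain ⟨x, h, p, rfl⟩ := hcn
  obtain ⟨hp, he⟩ := (Walk.cons_isCycle_iff p h).mp hc
  have hpn : ¬ p.Nil := by
    cases p with
    | nil => exact absurd h (G.loopless.irrefl _)
    | cons _ _ => exact Walk.not_nil_cons
  have hrn : ¬ p.reverse.Nil := by
    rw [Walk.nil_iff_length_eq, Walk.length_reverse]
    rw [Walk.nil_iff_length_eq] at hpn
    exact hpn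
  have hb : s(v, p.reverse.getVert 1) ∈ p.edges := by
    have := walk_snd_edge_mem hrn
    rwa [Walk.edges_reverse, List.mem_reverse] at this
  refine ⟨x, p.reverse.getVert 1, ?_, ?_, ?_, ?_⟩
  · intro heq
    have hx : s(v, x) = s(v, p.reverse.getVert 1) := congrArg (fun z => s(v, z)) heq
    exact he (by rw [hx]; exact hb)
  · rw [Walk.edges_cons]; exact List.mem_cons_self
  · rw [Walk.edges_cons]; exact List.mem_cons_of_mem _ hb
  · intro w hw
    rw [Walk.edges_cons, List.mem_cons] at hw
    rcases hw with hw | hw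
    · left
      rw [Sym2.eq_iff] at hw
      rcases hw with ⟨-, h2⟩ | ⟨h1, h2⟩
      · exact h2
      · exact absurd h1 h.ne
    · right; exact path_end_unique hp hw

lemma cycle_neighbors {v u : V} {c : G.Walk v v} (hc : c.IsCycle) (hu : u ∈ c.support) :
    ∃ a b : V, a ≠ b ∧ s(u, a) ∈ c.edges ∧ s(u, b) ∈ c.edges ∧
      ∀ w, s(u, w) ∈ c.edges → w = a ∨ w = b := by
  obtain ⟨a, b, hab, ha, hb, hun⟩ := cycle_start_neighbors (hc.rotate hu)
  have hperm := Walk.rotate_edges c u hu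
  exact ⟨a, b, hab, hperm.mem_iff.mp ha, hperm.mem_iff.mp hb,
    fun w hw => hun w (hperm.mem_iff.mpr hw)⟩

lemma cycle_filter_card {v u : V} [Fintype V] {c : G.Walk v v} (hc : c.IsCycle)
    (hu : u ∈ c.support) :
    (Finset.univ.filter (fun w => s(u, w) ∈ c.edges)).card = 2 := by
  obtain ⟨a, b, hab, ha, hb, hun⟩ := cycle_neighbors hc hu
  have hset : Finset.univ.filter (fun w => s(u, w) ∈ c.edges) = {a, b} := by
    ext w
    simp only [Finset.mem_filter, Finset.mem_univ, true_and, Finset.mem_insert,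
      Finset.mem_singleton]
    exact ⟨hun w, by rintro (rfl | rfl) <;> assumption⟩
  rw [hset, Finset.card_insert_of_notMem (by simpa using hab), Finset.card_singleton]

lemma acyclic_of_consecutive {n : ℕ} {F : SimpleGraph (Fin n)}
    (hF : ∀ u w : Fin n, F.Adj u w → u.val + 1 = w.val ∨ w.val + 1 = u.val) :
    F.IsAcyclic := by
  intro v c hc
  have hne : c.support.toFinset.Nonempty := ⟨v, List.mem_toFinset.mpr c.start_mem_support⟩
  have hus : c.support.toFinset.min' hne ∈ c.support :=
    List.mem_toFinset.mp (Finset.min'_mem _ hne)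
  set u := c.support.toFinset.min' hne with hu
  obtain ⟨a, b, hab, ha, hb, -⟩ := cycle_neighbors hc hus
  have key : ∀ w, s(u, w) ∈ c.edges → w.val = u.val + 1 := by
    intro w hw
    have h1 := hF u w (Walk.adj_of_mem_edges c hw)
    have h2 : u ≤ w := Finset.min'_le _ _
      (List.mem_toFinset.mpr (Walk.snd_mem_support_of_mem_edges c hw))
    rw [Fin.le_def] at h2
    omega
  exact hab (Fin.ext ((key a ha).trans (key b hb).symm))

end AuxWalk

section AuxCount

lemma double_count {V : Type*} [Fintype V] [DecidableEq V] (R : V → V → Prop)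
    [DecidableRel R] (pP pQ : V → Prop) [DecidablePred pP] [DecidablePred pQ]
    (hsymm : ∀ u w, R u w ↔ R w u) :
    ∑ p ∈ Finset.univ.filter pP, ((Finset.univ.filter pQ).filter (fun q => R p q)).card
      = ∑ q ∈ Finset.univ.filter pQ,
          ((Finset.univ.filter pP).filter (fun p => R q p)).card := by
  simp only [Finset.card_filter]
  rw [Finset.sum_comm]
  exact Finset.sum_congr rfl fun q _ => Finset.sum_congr rfl fun p _ =>
    if_congr (hsymm p q) rfl rfl

lemma even_diag {V : Type*} [Fintype V] [DecidableEq V] (R : V → V → Prop)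
    [DecidableRel R] (p : V → Prop) [DecidablePred p]
    (hsymm : ∀ u w, R u w ↔ R w u) (hirr : ∀ v, ¬ R v v) :
    Even (∑ x ∈ Finset.univ.filter p,
      ((Finset.univ.filter p).filter (fun q => R x q)).card) := by
  classical
  let K : SimpleGraph V :=
    { Adj := fun u w => p u ∧ p w ∧ R u w
      symm := ⟨fun u w h => ⟨h.2.1, h.1, (hsymm u w).mp h.2.2⟩⟩
      loopless := ⟨fun v h => hirr v h.2.2⟩ }
  haveI : DecidableRel K.Adj := fun u w => inferInstanceAs (Decidable (p u ∧ p w ∧ R u w))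
  have hdeg : ∀ v : V, (if p v then ((Finset.univ.filter p).filter (fun q => R v q)).card
      else 0) = K.degree v := by
    intro v
    rw [← SimpleGraph.card_neighborFinset_eq_degree, SimpleGraph.neighborFinset_eq_filter]
    by_cases hv : p v
    · rw [if_pos hv]
      congr 1
      ext w
      simp only [Finset.mem_filter, Finset.mem_univ, true_and]
      show p w ∧ R v w ↔ p v ∧ p w ∧ R v w
      tauto
    · rw [if_neg hv]
      symm
      rw [Finset.card_eq_zero, Finset.filter_eq_empty_iff]
      intro w _
      show ¬ (p v ∧ p w ∧ R v w)
      tauto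
  have hsum : ∑ x ∈ Finset.univ.filter p,
      ((Finset.univ.filter p).filter (fun q => R x q)).card = ∑ v, K.degree v := by
    rw [Finset.sum_filter]
    exact Finset.sum_congr rfl fun v _ => hdeg v
  rw [hsum, SimpleGraph.sum_degrees_eq_twice_card_edges]
  exact ⟨K.edgeFinset.card, by ring⟩

lemma split3 {n a b : ℕ} (hab : a ≤ b) (T : Finset (Fin n)) :
    (T.filter (fun w => w.val < a)).card
    + (T.filter (fun w => a ≤ w.val ∧ w.val < b)).card
    + (T.filter (fun w => b ≤ w.val)).card = T.card := by
  classical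
  have h1 : T.filter (fun w => a ≤ w.val ∧ w.val < b)
      = (T.filter (fun w => ¬ w.val < a)).filter (fun w => w.val < b) := by
    rw [Finset.filter_filter]
    ext w
    simp only [Finset.mem_filter]
    by_cases hT : w ∈ T <;> simp [hT] <;> omega
  have h2 : T.filter (fun w => b ≤ w.val)
      = (T.filter (fun w => ¬ w.val < a)).filter (fun w => ¬ w.val < b) := by
    rw [Finset.filter_filter]
    ext w
    simp only [Finset.mem_filter]
    by_cases hT : w ∈ T <;> simp [hT] <;> omega
  rw [h1, h2, Nat.add_assoc, Finset.card_filter_add_card_filter_not,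
    Finset.card_filter_add_card_filter_not]

lemma card_filter_Ico {n a b : ℕ} (h0 : 0 < n) (hb : b ≤ n) :
    (Finset.univ.filter (fun v : Fin n => a ≤ v.val ∧ v.val < b)).card = b - a := by
  rw [← Nat.card_Ico a b]
  apply Finset.card_nbij' (i := fun v : Fin n => v.val)
    (j := fun k => (⟨k % n, Nat.mod_lt k h0⟩ : Fin n))
  · intro v hv
    simp only [Finset.mem_coe, Finset.mem_filter, Finset.mem_univ, true_and] at hv
    simp [Finset.mem_Ico, hv.1, hv.2]
  · intro k hk
    rw [Finset.mem_coe, Finset.mem_Ico] at hk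
    have hkn : k < n := by omega
    simp only [Finset.mem_coe, Finset.mem_filter, Finset.mem_univ, true_and, Nat.mod_eq_of_lt hkn]
    omega
  · intro v _
    exact Fin.ext (by simp [Nat.mod_eq_of_lt v.isLt])
  · intro k hk
    rw [Finset.mem_coe, Finset.mem_Ico] at hk
    have hkn : k < n := by omega
    simp [Nat.mod_eq_of_lt hkn]

end AuxCount
section Core

lemma H'core {n d ℓ : ℕ} (hld : ℓ < d) (h2d : d * 2 ≤ n + ℓ - 1)
    {F : SimpleGraph (Fin n)} (hFle : F ≤ H'graph n d ℓ)
    (hcard : F.edgeSet.ncard = ℓ)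
    (hsupp : F.support ⊆ {v : Fin n | n - d - 1 ≤ v.val ∧ v.val < n - d + ℓ}) :
    ¬ ∃ (v : Fin n) (c : (H'graph n d ℓ).Walk v v), c.IsHamiltonianCycle ∧
        ∀ e ∈ F.edgeSet, e ∈ c.edges := by
  classical
  have hn : d + 2 ≤ n := by omega
  rintro ⟨v, c, hham, hFc⟩
  have hRsymm : ∀ u w : Fin n, s(u, w) ∈ c.edges ↔ s(w, u) ∈ c.edges := by
    intro u w
    rw [Sym2.eq_swap]
  have hRadj : ∀ u w : Fin n, s(u, w) ∈ c.edges → (H'graph n d ℓ).Adj u w :=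
    fun u w h => Walk.adj_of_mem_edges c h
  have hRirr : ∀ u : Fin n, ¬ s(u, u) ∈ c.edges :=
    fun u h => (H'graph n d ℓ).loopless.irrefl u (hRadj u u h)
  -- the three-way split of the two cycle-neighbours of any vertex
  have hsplitu : ∀ u : Fin n,
      ((Finset.univ.filter (fun w : Fin n => w.val < n - d - 1)).filter
        (fun q => s(u, q) ∈ c.edges)).card
      + ((Finset.univ.filter (fun w : Fin n => n - d - 1 ≤ w.val ∧ w.val < n - d + ℓ)).filter
        (fun q => s(u, q) ∈ c.edges)).card
      + ((Finset.univ.filter (fun w : Fin n => n - d + ℓ ≤ w.val)).filter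
        (fun q => s(u, q) ∈ c.edges)).card = 2 := by
    intro u
    have h := split3 (n := n) (a := n - d - 1) (b := n - d + ℓ) (by omega)
      (Finset.univ.filter (fun w : Fin n => s(u, w) ∈ c.edges))
    have e1 := Finset.filter_comm (fun w : Fin n => s(u, w) ∈ c.edges)
      (fun w : Fin n => w.val < n - d - 1) (Finset.univ)
    have e2 := Finset.filter_comm (fun w : Fin n => s(u, w) ∈ c.edges)
      (fun w : Fin n => n - d - 1 ≤ w.val ∧ w.val < n - d + ℓ) (Finset.univ)
    have e3 := Finset.filter_comm (fun w : Fin n => s(u, w) ∈ c.edges)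
      (fun w : Fin n => n - d + ℓ ≤ w.val) (Finset.univ)
    rw [e1, e2, e3, cycle_filter_card hham.isCycle (hham.mem_support u)] at h
    exact h
  -- handshake for F
  haveI instF : DecidableRel F.Adj := Classical.decRel _
  have hFhand : ∑ s ∈ Finset.univ.filter
        (fun w : Fin n => n - d - 1 ≤ w.val ∧ w.val < n - d + ℓ),
      (Finset.univ.filter (fun w => F.Adj s w)).card = 2 * ℓ := by
    have h1 : ∀ v : Fin n, ¬ (n - d - 1 ≤ v.val ∧ v.val < n - d + ℓ) →
        (Finset.univ.filter (fun w => F.Adj v w)).card = 0 := by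
      intro v hv
      rw [Finset.card_eq_zero, Finset.filter_eq_empty_iff]
      intro w _ hadj
      exact hv (hsupp ((SimpleGraph.mem_support F).mpr ⟨w, hadj⟩))
    have h2 : ∑ s ∈ Finset.univ.filter
          (fun w : Fin n => n - d - 1 ≤ w.val ∧ w.val < n - d + ℓ),
        (Finset.univ.filter (fun w => F.Adj s w)).card
        = ∑ v : Fin n, (Finset.univ.filter (fun w => F.Adj v w)).card := by
      rw [Finset.sum_filter]
      apply Finset.sum_congr rfl
      intro v _
      by_cases hv : (n - d - 1 ≤ v.val ∧ v.val < n - d + ℓ)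
      · rw [if_pos hv]
      · rw [if_neg hv, h1 v hv]
    have h3 : ∀ v : Fin n, (Finset.univ.filter (fun w => F.Adj v w)).card = F.degree v := by
      intro v
      rw [← SimpleGraph.card_neighborFinset_eq_degree, SimpleGraph.neighborFinset_eq_filter]
    have h4 : F.edgeFinset.card = ℓ := by
      rw [Set.ncard_eq_toFinset_card'] at hcard
      exact hcard
    rw [h2, Finset.sum_congr rfl (fun v _ => h3 v),
      SimpleGraph.sum_degrees_eq_twice_card_edges, h4]
  -- F-degrees are at most the number of cycle-neighbours inside S
  have hFle2 : ∀ s : Fin n,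
      (Finset.univ.filter (fun w => F.Adj s w)).card ≤
      ((Finset.univ.filter (fun w : Fin n => n - d - 1 ≤ w.val ∧ w.val < n - d + ℓ)).filter
        (fun q => s(s, q) ∈ c.edges)).card := by
    intro s
    apply Finset.card_le_card
    intro w hw
    simp only [Finset.mem_filter, Finset.mem_univ, true_and] at hw ⊢
    have hws := hsupp ((SimpleGraph.mem_support F).mpr ⟨s, hw.symm⟩)
    exact ⟨hws, hFc _ ((SimpleGraph.mem_edgeSet F).mpr hw)⟩
  -- cardinality of S
  have hcardS : (Finset.univ.filter
      (fun w : Fin n => n - d - 1 ≤ w.val ∧ w.val < n - d + ℓ)).card = ℓ + 1 := by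
    rw [card_filter_Ico (by omega) (by omega)]
    omega
  -- summing the split over S
  have hSsum : (∑ s ∈ Finset.univ.filter
        (fun w : Fin n => n - d - 1 ≤ w.val ∧ w.val < n - d + ℓ),
      ((Finset.univ.filter (fun w : Fin n => w.val < n - d - 1)).filter
        (fun q => s(s, q) ∈ c.edges)).card)
      + (∑ s ∈ Finset.univ.filter
        (fun w : Fin n => n - d - 1 ≤ w.val ∧ w.val < n - d + ℓ),
      ((Finset.univ.filter (fun w : Fin n => n - d - 1 ≤ w.val ∧ w.val < n - d + ℓ)).filter
        (fun q => s(s, q) ∈ c.edges)).card)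
      + (∑ s ∈ Finset.univ.filter
        (fun w : Fin n => n - d - 1 ≤ w.val ∧ w.val < n - d + ℓ),
      ((Finset.univ.filter (fun w : Fin n => n - d + ℓ ≤ w.val)).filter
        (fun q => s(s, q) ∈ c.edges)).card) = (ℓ + 1) * 2 := by
    rw [← Finset.sum_add_distrib, ← Finset.sum_add_distrib]
    rw [Finset.sum_congr rfl (fun s (_ : s ∈ Finset.univ.filter
      (fun w : Fin n => n - d - 1 ≤ w.val ∧ w.val < n - d + ℓ)) => hsplitu s),
      Finset.sum_const, hcardS, smul_eq_mul]
  have hSmid : 2 * ℓ ≤ ∑ s ∈ Finset.univ.filter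
        (fun w : Fin n => n - d - 1 ≤ w.val ∧ w.val < n - d + ℓ),
      ((Finset.univ.filter (fun w : Fin n => n - d - 1 ≤ w.val ∧ w.val < n - d + ℓ)).filter
        (fun q => s(s, q) ∈ c.edges)).card := by
    rw [← hFhand]
    exact Finset.sum_le_sum (fun s _ => hFle2 s)
  -- crossing darts
  have htail : ∀ b : Fin n, b ∈ c.support.tail := by
    intro b
    have h := hham.isHamiltonian_tail.mem_support b
    rwa [Walk.support_tail_of_not_nil c hham.isCycle.not_nil] at h
  have cross : ∀ (a b : Fin n) (P : Set (Fin n)), a ∈ P → b ∉ P →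
      ∃ u w : Fin n, s(u, w) ∈ c.edges ∧ u ∈ P ∧ w ∉ P := by
    intro a b P hPa hPb
    have ha : a ∈ c.support := hham.mem_support a
    have hb' : b ∈ (c.rotate a ha).support :=
      List.mem_of_mem_tail ((Walk.support_rotate c a ha).mem_iff.mpr (htail b))
    obtain ⟨dt, hdm, hd1, hd2⟩ :=
      Walk.exists_boundary_dart ((c.rotate a ha).takeUntil b hb') P hPa hPb
    refine ⟨dt.fst, dt.snd, ?_, hd1, hd2⟩
    have h1 : dt.edge ∈ ((c.rotate a ha).takeUntil b hb').edges := List.mem_map_of_mem hdm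
    have h2 : dt.edge ∈ (c.rotate a ha).edges := Walk.edges_takeUntil_subset _ hb' h1
    exact (Walk.rotate_edges c a ha).mem_iff.mp h2
  -- crossing from X to S
  obtain ⟨u1, w1, hRe1, hu1, hw1⟩ := cross ⟨0, by omega⟩ ⟨n - 1, by omega⟩
    {v : Fin n | v.val < n - d - 1}
    (by show (0 : ℕ) < n - d - 1; omega)
    (by show ¬ (n - 1 < n - d - 1); omega)
  simp only [Set.mem_setOf_eq] at hu1 hw1
  have hw1S : n - d - 1 ≤ w1.val ∧ w1.val < n - d + ℓ := by
    obtain ⟨-, hcase⟩ := hRadj u1 w1 hRe1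
    rcases hcase with ⟨h1, h2⟩ | ⟨h1, h2⟩ <;> omega
  -- crossing from Y to S
  obtain ⟨u2, w2, hRe2, hu2, hw2⟩ := cross ⟨n - 1, by omega⟩ ⟨0, by omega⟩
    {v : Fin n | n - d + ℓ ≤ v.val}
    (by show n - d + ℓ ≤ n - 1; omega)
    (by show ¬ (n - d + ℓ ≤ 0); omega)
  simp only [Set.mem_setOf_eq] at hu2 hw2
  have hw2S : n - d - 1 ≤ w2.val ∧ w2.val < n - d + ℓ := by
    obtain ⟨-, hcase⟩ := hRadj u2 w2 hRe2
    rcases hcase with ⟨h1, h2⟩ | ⟨h1, h2⟩ <;> omega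
  -- the X-side count is even and positive, hence at least 2
  have geX : 2 ≤ ∑ x ∈ Finset.univ.filter (fun w : Fin n => w.val < n - d - 1),
      ((Finset.univ.filter (fun w : Fin n => n - d - 1 ≤ w.val ∧ w.val < n - d + ℓ)).filter
        (fun q => s(x, q) ∈ c.edges)).card := by
    have hpos : 1 ≤ ∑ x ∈ Finset.univ.filter (fun w : Fin n => w.val < n - d - 1),
        ((Finset.univ.filter (fun w : Fin n => n - d - 1 ≤ w.val ∧ w.val < n - d + ℓ)).filter
          (fun q => s(x, q) ∈ c.edges)).card := by
      refine le_trans ?_ (Finset.single_le_sum (f := fun x : Fin n =>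
        ((Finset.univ.filter (fun w : Fin n => n - d - 1 ≤ w.val ∧ w.val < n - d + ℓ)).filter
          (fun q => s(x, q) ∈ c.edges)).card) (fun i _ => Nat.zero_le _)
        (Finset.mem_filter.mpr ⟨Finset.mem_univ u1, hu1⟩))
      exact Finset.card_pos.mpr
        ⟨w1, Finset.mem_filter.mpr ⟨Finset.mem_filter.mpr ⟨Finset.mem_univ w1, hw1S⟩, hRe1⟩⟩
    -- evenness
    have hXuniv := Finset.sum_congr rfl (fun s (_ : s ∈ Finset.univ.filter
        (fun w : Fin n => w.val < n - d - 1)) => hsplitu s)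
    rw [Finset.sum_add_distrib, Finset.sum_add_distrib, Finset.sum_const, smul_eq_mul] at hXuniv
    have hXY0 : ∑ x ∈ Finset.univ.filter (fun w : Fin n => w.val < n - d - 1),
        ((Finset.univ.filter (fun w : Fin n => n - d + ℓ ≤ w.val)).filter
          (fun q => s(x, q) ∈ c.edges)).card = 0 := by
      apply Finset.sum_eq_zero
      intro x hx
      rw [Finset.mem_filter] at hx
      rw [Finset.card_eq_zero, Finset.filter_eq_empty_iff]
      intro q hq
      rw [Finset.mem_filter] at hq
      intro hR
      obtain ⟨-, hcase⟩ := hRadj x q hR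
      have h1 := hx.2
      have h2 := hq.2
      rcases hcase with ⟨ha, hb⟩ | ⟨ha, hb⟩ <;> omega
    rw [hXY0, Nat.add_zero] at hXuniv
    have heven1 := even_diag (fun u w : Fin n => s(u, w) ∈ c.edges)
      (fun w : Fin n => w.val < n - d - 1) hRsymm hRirr
    have heven2 : Even ((Finset.univ.filter
        (fun w : Fin n => w.val < n - d - 1)).card * 2) :=
      Nat.even_mul.mpr (Or.inr even_two)
    rw [← hXuniv, Nat.even_add] at heven2
    obtain ⟨r, hr⟩ := heven2.mp heven1
    omega
  -- the Y-side count is even and positive, hence at least 2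
  have geY : 2 ≤ ∑ x ∈ Finset.univ.filter (fun w : Fin n => n - d + ℓ ≤ w.val),
      ((Finset.univ.filter (fun w : Fin n => n - d - 1 ≤ w.val ∧ w.val < n - d + ℓ)).filter
        (fun q => s(x, q) ∈ c.edges)).card := by
    have hpos : 1 ≤ ∑ x ∈ Finset.univ.filter (fun w : Fin n => n - d + ℓ ≤ w.val),
        ((Finset.univ.filter (fun w : Fin n => n - d - 1 ≤ w.val ∧ w.val < n - d + ℓ)).filter
          (fun q => s(x, q) ∈ c.edges)).card := by
      refine le_trans ?_ (Finset.single_le_sum (f := fun x : Fin n =>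
        ((Finset.univ.filter (fun w : Fin n => n - d - 1 ≤ w.val ∧ w.val < n - d + ℓ)).filter
          (fun q => s(x, q) ∈ c.edges)).card) (fun i _ => Nat.zero_le _)
        (Finset.mem_filter.mpr ⟨Finset.mem_univ u2, hu2⟩))
      exact Finset.card_pos.mpr
        ⟨w2, Finset.mem_filter.mpr ⟨Finset.mem_filter.mpr ⟨Finset.mem_univ w2, hw2S⟩, hRe2⟩⟩
    have hYuniv := Finset.sum_congr rfl (fun s (_ : s ∈ Finset.univ.filter
        (fun w : Fin n => n - d + ℓ ≤ w.val)) => hsplitu s)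
    rw [Finset.sum_add_distrib, Finset.sum_add_distrib, Finset.sum_const, smul_eq_mul] at hYuniv
    have hYX0 : ∑ x ∈ Finset.univ.filter (fun w : Fin n => n - d + ℓ ≤ w.val),
        ((Finset.univ.filter (fun w : Fin n => w.val < n - d - 1)).filter
          (fun q => s(x, q) ∈ c.edges)).card = 0 := by
      apply Finset.sum_eq_zero
      intro x hx
      rw [Finset.mem_filter] at hx
      rw [Finset.card_eq_zero, Finset.filter_eq_empty_iff]
      intro q hq
      rw [Finset.mem_filter] at hq
      intro hR
      obtain ⟨-, hcase⟩ := hRadj x q hR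
      have h1 := hx.2
      have h2 := hq.2
      rcases hcase with ⟨ha, hb⟩ | ⟨ha, hb⟩ <;> omega
    rw [hYX0, Nat.zero_add] at hYuniv
    have heven1 := even_diag (fun u w : Fin n => s(u, w) ∈ c.edges)
      (fun w : Fin n => n - d + ℓ ≤ w.val) hRsymm hRirr
    have heven2 : Even ((Finset.univ.filter
        (fun w : Fin n => n - d + ℓ ≤ w.val)).card * 2) :=
      Nat.even_mul.mpr (Or.inr even_two)
    rw [← hYuniv, Nat.even_add] at heven2
    obtain ⟨r, hr⟩ := heven2.mpr heven1
    omega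
  -- symmetry of the edge counts
  have symX : (∑ s ∈ Finset.univ.filter
        (fun w : Fin n => n - d - 1 ≤ w.val ∧ w.val < n - d + ℓ),
      ((Finset.univ.filter (fun w : Fin n => w.val < n - d - 1)).filter
        (fun q => s(s, q) ∈ c.edges)).card)
      = ∑ x ∈ Finset.univ.filter (fun w : Fin n => w.val < n - d - 1),
      ((Finset.univ.filter (fun w : Fin n => n - d - 1 ≤ w.val ∧ w.val < n - d + ℓ)).filter
        (fun q => s(x, q) ∈ c.edges)).card :=
    double_count (fun u w : Fin n => s(u, w) ∈ c.edges)
      (fun w : Fin n => n - d - 1 ≤ w.val ∧ w.val < n - d + ℓ)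
      (fun w : Fin n => w.val < n - d - 1) hRsymm
  have symY : (∑ s ∈ Finset.univ.filter
        (fun w : Fin n => n - d - 1 ≤ w.val ∧ w.val < n - d + ℓ),
      ((Finset.univ.filter (fun w : Fin n => n - d + ℓ ≤ w.val)).filter
        (fun q => s(s, q) ∈ c.edges)).card)
      = ∑ x ∈ Finset.univ.filter (fun w : Fin n => n - d + ℓ ≤ w.val),
      ((Finset.univ.filter (fun w : Fin n => n - d - 1 ≤ w.val ∧ w.val < n - d + ℓ)).filter
        (fun q => s(x, q) ∈ c.edges)).card :=
    double_count (fun u w : Fin n => s(u, w) ∈ c.edges)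
      (fun w : Fin n => n - d - 1 ≤ w.val ∧ w.val < n - d + ℓ)
      (fun w : Fin n => n - d + ℓ ≤ w.val) hRsymm
  rw [symX, symY] at hSsum
  omega

end Core

/-- `H'_{n,d,ℓ}` is not `ℓ`-hamiltonian; more precisely, no path with `ℓ` edges spanning the
`ℓ+1` identified (dominating) vertices `{n-d-1, …, n-d+ℓ-1}` extends to a hamiltonian cycle
of `H'_{n,d,ℓ}`. -/
theorem H'graph_not_lHamiltonian {n d ℓ : ℕ} (hld : ℓ < d) (hd : d ≤ (n + ℓ - 1) / 2) :
    ¬ (H'graph n d ℓ).IsLHamiltonian ℓ ∧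
    ∀ F : SimpleGraph (Fin n), F ≤ H'graph n d ℓ → F.IsLinearForest → F.edgeSet.ncard = ℓ →
      F.support = {v : Fin n | n - d - 1 ≤ v.val ∧ v.val < n - d + ℓ} →
      ¬ ∃ (v : Fin n) (c : (H'graph n d ℓ).Walk v v), c.IsHamiltonianCycle ∧
          ∀ e ∈ F.edgeSet, e ∈ c.edges := by
  classical
  have h2d : d * 2 ≤ n + ℓ - 1 := (Nat.le_div_iff_mul_le (by norm_num)).mp hd
  have hn : d + 2 ≤ n := by omega
  have h0 : 0 < n := by omega
  constructor
  · intro hham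
    set Fp : SimpleGraph (Fin n) := SimpleGraph.fromRel
      (fun u w => n - d - 1 ≤ u.val ∧ w.val < n - d + ℓ ∧ u.val + 1 = w.val) with hFp
    have hadj : ∀ u w : Fin n, Fp.Adj u w ↔ u ≠ w ∧
        ((n - d - 1 ≤ u.val ∧ w.val < n - d + ℓ ∧ u.val + 1 = w.val) ∨
         (n - d - 1 ≤ w.val ∧ u.val < n - d + ℓ ∧ w.val + 1 = u.val)) := by
      intro u w
      rw [hFp]
      exact SimpleGraph.fromRel_adj _ u w
    have hle : Fp ≤ H'graph n d ℓ := by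
      intro u w h
      rw [hadj] at h
      obtain ⟨hne, hr⟩ := h
      refine ⟨hne, Or.inl ?_⟩
      rcases hr with ⟨h1, h2, h3⟩ | ⟨h1, h2, h3⟩ <;> exact ⟨by omega, by omega⟩
    have hlf : Fp.IsLinearForest := by
      constructor
      · apply acyclic_of_consecutive
        intro u w h
        rw [hadj] at h
        rcases h.2 with ⟨-, -, h3⟩ | ⟨-, -, h3⟩
        · exact Or.inl h3
        · exact Or.inr h3
      · intro v a b cc ha hb hc
        rw [hadj] at ha hb hc
        have h1 := ha.2
        have h2 := hb.2
        have h3 := hc.2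
        have hval : a.val = b.val ∨ a.val = cc.val ∨ b.val = cc.val := by
          rcases h1 with ⟨-, -, e1⟩ | ⟨-, -, e1⟩ <;> rcases h2 with ⟨-, -, e2⟩ | ⟨-, -, e2⟩ <;>
            rcases h3 with ⟨-, -, e3⟩ | ⟨-, -, e3⟩ <;> omega
        rcases hval with h | h | h
        · exact Or.inl (Fin.ext h)
        · exact Or.inr (Or.inl (Fin.ext h))
        · exact Or.inr (Or.inr (Fin.ext h))
    haveI : DecidableRel Fp.Adj := Classical.decRel _
    have hIco : (Finset.Ico (n - d - 1) (n - d - 1 + ℓ)).card = ℓ := by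
      rw [Nat.card_Ico]
      omega
    have hcardE : Fp.edgeSet.ncard = ℓ := by
      rw [Set.ncard_eq_toFinset_card']
      rw [← hIco]
      apply Finset.card_nbij'
        (i := fun e => Sym2.lift ⟨fun a b : Fin n => min a.val b.val,
          fun a b => Nat.min_comm _ _⟩ e)
        (j := fun k => s((⟨k % n, Nat.mod_lt k h0⟩ : Fin n),
          (⟨(k + 1) % n, Nat.mod_lt _ h0⟩ : Fin n)))
      · intro e he
        rw [Finset.mem_coe, Set.mem_toFinset] at he
        induction e using Sym2.ind with
        | _ u w =>
          rw [SimpleGraph.mem_edgeSet, hadj] at he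
          rw [Finset.mem_coe, Finset.mem_Ico]
          show n - d - 1 ≤ min u.val w.val ∧ min u.val w.val < n - d - 1 + ℓ
          rcases he.2 with ⟨h1, h2, h3⟩ | ⟨h1, h2, h3⟩ <;> omega
      · intro k hk
        rw [Finset.mem_coe, Finset.mem_Ico] at hk
        rw [Finset.mem_coe, Set.mem_toFinset, SimpleGraph.mem_edgeSet, hadj]
        have hk1 : k < n := by omega
        have hk2 : k + 1 < n := by omega
        constructor
        · intro heq
          have hv : k % n = (k + 1) % n := congrArg Fin.val heq
          rw [Nat.mod_eq_of_lt hk1, Nat.mod_eq_of_lt hk2] at hv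
          omega
        · left
          show n - d - 1 ≤ k % n ∧ (k + 1) % n < n - d + ℓ ∧ k % n + 1 = (k + 1) % n
          rw [Nat.mod_eq_of_lt hk1, Nat.mod_eq_of_lt hk2]
          omega
      · intro e he
        rw [Finset.mem_coe, Set.mem_toFinset] at he
        induction e using Sym2.ind with
        | _ u w =>
          rw [SimpleGraph.mem_edgeSet, hadj] at he
          rcases he.2 with ⟨h1, h2, h3⟩ | ⟨h1, h2, h3⟩
          · have hval : Sym2.lift ⟨fun a b : Fin n => min a.val b.val,
                fun a b => Nat.min_comm _ _⟩ s(u, w) = u.val := by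
              show min u.val w.val = u.val
              omega
            beta_reduce
            rw [hval]
            have e1 : (⟨u.val % n, Nat.mod_lt _ h0⟩ : Fin n) = u :=
              Fin.ext (by simp [Nat.mod_eq_of_lt u.isLt])
            have e2 : (⟨(u.val + 1) % n, Nat.mod_lt _ h0⟩ : Fin n) = w := by
              apply Fin.ext
              simp only [Nat.mod_eq_of_lt (show u.val + 1 < n by omega)]
              omega
            rw [e1, e2]
          · have hval : Sym2.lift ⟨fun a b : Fin n => min a.val b.val,
                fun a b => Nat.min_comm _ _⟩ s(u, w) = w.val := by
              show min u.val w.val = w.val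
              omega
            beta_reduce
            rw [hval]
            have e1 : (⟨w.val % n, Nat.mod_lt _ h0⟩ : Fin n) = w :=
              Fin.ext (by simp [Nat.mod_eq_of_lt w.isLt])
            have e2 : (⟨(w.val + 1) % n, Nat.mod_lt _ h0⟩ : Fin n) = u := by
              apply Fin.ext
              simp only [Nat.mod_eq_of_lt (show w.val + 1 < n by omega)]
              omega
            rw [e1, e2, Sym2.eq_swap]
      · intro k hk
        rw [Finset.mem_coe, Finset.mem_Ico] at hk
        have hk1 : k < n := by omega
        have hk2 : k + 1 < n := by omega
        show min (k % n) ((k + 1) % n) = k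
        rw [Nat.mod_eq_of_lt hk1, Nat.mod_eq_of_lt hk2]
        omega
    have hsuppF : Fp.support ⊆ {v : Fin n | n - d - 1 ≤ v.val ∧ v.val < n - d + ℓ} := by
      intro v hv
      rw [SimpleGraph.mem_support] at hv
      obtain ⟨w, hw⟩ := hv
      rw [hadj] at hw
      rw [Set.mem_setOf_eq]
      rcases hw.2 with ⟨h1, h2, h3⟩ | ⟨h1, h2, h3⟩ <;> exact ⟨by omega, by omega⟩
    obtain ⟨v, cyc, hc, hFc⟩ := hham Fp hle hlf hcardE
    exact H'core hld h2d hle hcardE hsuppF ⟨v, cyc, hc, hFc⟩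
  · intro F hle hlf hcard hsupp
    exact H'core hld h2d hle hcard hsupp.subset
end

section
/- Let n, d, ℓ be integers with 0 ≤ ℓ < d ≤ ⌊(n+ℓ−1)/2⌋. If G is an n-vertex simple graph with minimum degree δ(G) ≥ d, and G is not ℓ-hamiltonian, then e(G) ≤ max{ h(n,d,ℓ), h(n, ⌊(n+ℓ−1)/2⌋, ℓ) }. -/
open SimpleGraph

section Aux

open List Finset

variable {V : Type*}

/-- consecutive-pair edges of a list -/
def listEdges : List V → List (Sym2 V)
  | [] => []
  | [_] => []
  | x :: y :: r => s(x, y) :: listEdges (y :: r)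

@[simp] lemma listEdges_nil : listEdges ([] : List V) = [] := rfl
@[simp] lemma listEdges_single (x : V) : listEdges [x] = [] := rfl
@[simp] lemma listEdges_cons_cons (x y : V) (r : List V) :
    listEdges (x :: y :: r) = s(x, y) :: listEdges (y :: r) := rfl

lemma listEdges_subset_cons (x : V) (l : List V) : listEdges l ⊆ listEdges (x :: l) := by
  cases l with
  | nil => simp
  | cons y r => simp [List.subset_cons_of_subset, List.Subset.refl]

lemma listEdges_append_cons : ∀ (X : List V) (y : V) (Z : List V),
    listEdges (X ++ y :: Z) = listEdges (X ++ [y]) ++ listEdges (y :: Z)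
  | [], y, Z => by simp
  | [a], y, Z => by simp
  | a :: b :: X', y, Z => by
      have := listEdges_append_cons (b :: X') y Z
      simp only [List.cons_append, listEdges_cons_cons] at *
      rw [this]

lemma listEdges_concat (a : V) : ∀ (A : List V) (m : V),
    listEdges (a :: A ++ [m]) = listEdges (a :: A) ++ [s((a :: A).getLast (by simp), m)]
  | [], m => by simp
  | b :: A', m => by
      have := listEdges_concat b A' m
      simp only [List.cons_append, listEdges_cons_cons] at *
      rw [this]
      simp [List.getLast]

lemma listEdges_erase [DecidableEq V] {u : V} {e : Sym2 V} (hu : u ∉ e) :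
    ∀ {l : List V}, e ∈ listEdges l → e ∈ listEdges (l.erase u)
  | [], he => by simp at he
  | [x], he => by simp at he
  | x :: y :: r, he => by
      rcases List.mem_cons.mp he with rfl | he'
      · -- e = s(x,y), so x ≠ u and y ≠ u
        have hx : x ≠ u := fun h => hu (by simp [h])
        have hy : y ≠ u := fun h => hu (by simp [h])
        rw [List.erase_cons_tail (by simp [hx]), List.erase_cons_tail (by simp [hy])]
        simp
      · by_cases hx : x = u
        · subst hx
          rw [List.erase_cons_head]
          exact he'
        · rw [List.erase_cons_tail (by simp [hx])]
          by_cases hy : y = u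
          · subst hy
            rw [List.erase_cons_head]
            -- he' : e ∈ listEdges (y :: r) with y = u; e doesn't contain u
            cases r with
            | nil => simp at he'
            | cons c r' =>
              rcases List.mem_cons.mp he' with rfl | he'' 
              · exact absurd (by simp) hu
              · exact listEdges_subset_cons x _ he''
          · rw [List.erase_cons_tail (by simp [hy])]
            have := listEdges_erase hu (l := y :: r) he'
            rw [List.erase_cons_tail (by simp [hy])] at this
            exact List.mem_cons_of_mem _ this


namespace SimpleGraph.Walk

variable {G H : SimpleGraph V} {u v w : V}

lemma edge_start_eq {p : G.Walk u v} (hp : p.support.Nodup) (he : s(u, w) ∈ p.edges) :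
    ∃ (h : G.Adj u w) (q : G.Walk w v), p = Walk.cons h q := by
  cases p with
  | nil => simp at he
  | @cons _ z _ h' q' =>
    rw [edges_cons, List.mem_cons] at he
    rcases he with he | he
    · have hz : w = z := by
        rcases Sym2.eq_iff.mp he with ⟨-, rfl⟩ | ⟨h1, rfl⟩
        · rfl
        · exact absurd h1 h'.ne
      subst hz; exact ⟨h', q', rfl⟩
    · exfalso
      have hu : u ∈ q'.support := q'.fst_mem_support_of_mem_edges he
      rw [support_cons, List.nodup_cons] at hp
      exact hp.1 hu

lemma dart_snd_ne_start {p : G.Walk u v} (hp : p.support.Nodup) {t : G.Dart}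
    (ht : t ∈ p.darts) : t.snd ≠ u := by
  have h1 : t.snd ∈ p.support.tail := by
    rw [← map_snd_darts]; exact List.mem_map_of_mem ht
  rw [support_eq_cons, List.nodup_cons] at hp
  intro h; rw [h] at h1; exact hp.1 h1

lemma dart_fst_ne_end {p : G.Walk u v} (hp : p.support.Nodup) {t : G.Dart}
    (ht : t ∈ p.darts) : t.fst ≠ v := by
  have h1 : t.fst ∈ p.support.dropLast := by
    rw [← map_fst_darts]; exact List.mem_map_of_mem ht
  intro h
  have h2 := p.support.dropLast_append_getLast (by simp [support_ne_nil])
  have h3 : p.support.getLast (by simp [support_ne_nil]) = v := by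
    simpa using getLast_support p
  rw [← h2, List.nodup_append] at hp
  exact hp.2.2 _ h1 _ (by simp [h, h3]) rfl

lemma dart_inj_snd {p : G.Walk u v} (hp : p.support.Nodup) {t1 t2 : G.Dart}
    (h1 : t1 ∈ p.darts) (h2 : t2 ∈ p.darts) (h : t1.snd = t2.snd) : t1 = t2 := by
  have hnd : (p.darts.map (·.snd)).Nodup := by
    rw [map_snd_darts]; exact hp.tail
  exact List.inj_on_of_nodup_map hnd h1 h2 h

lemma dart_inj_fst {p : G.Walk u v} (hp : p.support.Nodup) {t1 t2 : G.Dart}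
    (h1 : t1 ∈ p.darts) (h2 : t2 ∈ p.darts) (h : t1.fst = t2.fst) : t1 = t2 := by
  have hnd : (p.darts.map (·.fst)).Nodup := by
    rw [map_fst_darts]; exact hp.sublist (List.dropLast_sublist _)
  exact List.inj_on_of_nodup_map hnd h1 h2 h

lemma exists_dart_snd {p : G.Walk u v} {x : V} (hx : x ∈ p.support) (hxu : x ≠ u) :
    ∃ t ∈ p.darts, t.snd = x := by
  have h1 : x ∈ p.support.tail := by
    rw [support_eq_cons] at hx
    rcases List.mem_cons.mp hx with rfl | h
    · exact absurd rfl hxu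
    · exact h
  rw [← map_snd_darts] at h1
  obtain ⟨t, ht, h⟩ := List.mem_map.mp h1
  exact ⟨t, ht, h⟩

lemma exists_decomp_of_dart [DecidableEq V] {p : G.Walk u v} (hp : p.support.Nodup) {t : G.Dart}
    (ht : t ∈ p.darts) :
    ∃ (h : G.Adj t.fst t.snd) (q1 : G.Walk u t.fst) (q3 : G.Walk t.snd v),
      p = q1.append (Walk.cons h q3) := by
  have h1 : t.fst ∈ p.support := dart_fst_mem_support_of_mem_darts _ ht
  have hspec := p.take_spec h1
  set q2 := p.dropUntil t.fst h1 with hq2def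
  have hq2nil : ¬ q2.Nil := not_nil_of_ne (dart_fst_ne_end hp ht)
  obtain ⟨x, h, q3, hq2⟩ := not_nil_iff.mp hq2nil
  have hd : (⟨(t.fst, x), h⟩ : G.Dart) ∈ p.darts := by
    rw [← hspec, darts_append]
    apply List.mem_append_right
    rw [hq2]; simp
  have he : (⟨(t.fst, x), h⟩ : G.Dart) = t := dart_inj_fst hp hd ht rfl
  obtain rfl : x = t.snd := by rw [← he]
  rw [hq2] at hspec
  exact ⟨h, p.takeUntil t.fst h1, q3, hspec.symm⟩

lemma IsCycle.transfer' {c : G.Walk u u} (hc : c.IsCycle) (h : ∀ e ∈ c.edges, e ∈ H.edgeSet) :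
    (c.transfer H h).IsCycle := by
  rw [isCycle_def, isTrail_def] at hc ⊢
  refine ⟨by rw [edges_transfer]; exact hc.1, ?_, by rw [support_transfer]; exact hc.2.2⟩
  intro hnil
  apply hc.2.1
  have : c.length = 0 := by
    rw [← length_transfer c h, hnil]; rfl
  rw [← nil_iff_length_eq] at this
  exact this.eq_nil

lemma IsHamiltonianCycle.transfer' [DecidableEq V] {c : G.Walk u u} (hc : c.IsHamiltonianCycle)
    (h : ∀ e ∈ c.edges, e ∈ H.edgeSet) : (c.transfer H h).IsHamiltonianCycle := by
  rw [isHamiltonianCycle_iff_isCycle_and_support_count_tail_eq_one] at hc ⊢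
  refine ⟨hc.1.transfer' h, ?_⟩
  rw [support_transfer]
  exact hc.2

lemma IsHamiltonianCycle.rotate' [DecidableEq V] {c : G.Walk u u} (hc : c.IsHamiltonianCycle)
    {x : V} (hx : x ∈ c.support) : (c.rotate x hx).IsHamiltonianCycle := by
  rw [isHamiltonianCycle_iff_isCycle_and_support_count_tail_eq_one] at hc ⊢
  refine ⟨hc.1.rotate hx, ?_⟩
  intro a
  rw [(support_rotate c x hx).perm.count_eq]
  exact hc.2 a

end SimpleGraph.Walk

namespace SimpleGraph.Walk

/-- Rotated hamiltonian path: from a hamiltonian path `a …→ x y …→ b` with `a ~ y`,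
get a hamiltonian path `x …→ a y …→ b` using the same edges except `xy`, plus `ay`. -/
lemma rotated_path [DecidableEq V] {H : SimpleGraph V} {a b : V} {p : H.Walk a b}
    (hp : p.IsHamiltonian) {t : H.Dart} (ht : t ∈ p.darts) (ha : H.Adj a t.snd) :
    ∃ p' : H.Walk t.fst b, p'.IsHamiltonian ∧
      (∀ e ∈ p.edges, e ≠ t.edge → e ∈ p'.edges) := by
  obtain ⟨h, q1, q3, rfl⟩ := exists_decomp_of_dart hp.isPath.support_nodup ht
  refine ⟨q1.reverse.append (Walk.cons ha q3), fun z => ?_, fun e he hne => ?_⟩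
  · have hz := hp z
    rw [support_append, support_cons, List.tail_cons] at hz ⊢
    rw [support_reverse, List.count_append, List.count_reverse] at *
    rw [← List.count_append] at *
    exact hz
  · rw [edges_append, edges_cons] at he ⊢
    rw [edges_reverse]
    rcases List.mem_append.mp he with h1 | h2
    · exact List.mem_append_left _ (List.mem_reverse.mpr h1)
    · rcases List.mem_cons.mp h2 with rfl | h3
      · exact absurd rfl hne
      · exact List.mem_append_right _ (List.mem_cons_of_mem _ h3)

/-- Rotation: from a hamiltonian path `a …→ x y …→ b` with `a ~ y` and `x ~ b`,
get a hamiltonian cycle using the same edges except `xy`. -/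
lemma rotated_cycle [DecidableEq V] {H : SimpleGraph V} {a b : V} {p : H.Walk a b}
    (hp : p.IsHamiltonian) (hnadj : ¬ H.Adj a b) {t : H.Dart} (ht : t ∈ p.darts)
    (ha : H.Adj a t.snd) (hb : H.Adj t.fst b) :
    ∃ c : H.Walk a a, c.IsHamiltonianCycle ∧ ∀ e ∈ p.edges, e ≠ t.edge → e ∈ c.edges := by
  obtain ⟨h, q1, q3, rfl⟩ := exists_decomp_of_dart hp.isPath.support_nodup ht
  have hya : H.Adj t.snd a := ha.symm
  set W2 : H.Walk b a := q3.reverse.append (Walk.cons hya Walk.nil) with hW2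
  set c : H.Walk a a := q1.append (Walk.cons hb W2) with hc
  -- supports
  have hps : (q1.append (Walk.cons h q3)).support = q1.support ++ q3.support := by
    rw [support_append, support_cons, List.tail_cons]
  have hnd : (q1.support ++ q3.support).Nodup := by
    rw [← hps]; exact hp.isPath.support_nodup
  have hdisj : q1.support.Disjoint q3.support := fun _ h1 h2 => ((List.nodup_append).mp hnd).2.2 _ h1 _ h2 rfl
  have hcs : c.support = q1.support ++ (q3.support.reverse ++ [a]) := by
    rw [hc, support_append, support_cons, List.tail_cons, hW2, support_append,
      support_reverse, support_cons, List.tail_cons, support_nil]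
  have hq1c : q1.support = a :: q1.support.tail := support_eq_cons q1
  -- the tail of c.support is a permutation of p.support
  have hperm : c.support.tail.Perm (q1.append (Walk.cons h q3)).support := by
    rw [hcs, hps, hq1c]
    simp only [List.cons_append, List.tail_cons]
    calc q1.support.tail ++ (q3.support.reverse ++ [a])
        = (q1.support.tail ++ q3.support.reverse) ++ [a] := by rw [List.append_assoc]
      _ ~ [a] ++ (q1.support.tail ++ q3.support.reverse) := List.perm_append_comm
      _ = a :: (q1.support.tail ++ q3.support.reverse) := rfl
      _ ~ a :: (q1.support.tail ++ q3.support) :=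
          List.Perm.cons _ (List.Perm.append_left _ q3.support.reverse_perm)
  -- membership facts
  have hbq3 : b ∈ q3.support := q3.end_mem_support
  have hyq3 : t.snd ∈ q3.support := q3.start_mem_support
  have hxq1 : t.fst ∈ q1.support := q1.end_mem_support
  have haq1 : a ∈ q1.support := q1.start_mem_support
  have hbq1 : b ∉ q1.support := fun hmem => hdisj hmem hbq3
  have hyq1 : t.snd ∉ q1.support := fun hmem => hdisj hmem hyq3
  have hxq3 : t.fst ∉ q3.support := fun hmem => hdisj hxq1 hmem
  have haq3 : a ∉ q3.support := fun hmem => hdisj haq1 hmem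
  -- edges
  have hpe : (q1.append (Walk.cons h q3)).edges = q1.edges ++ (t.edge :: q3.edges) := by
    rw [edges_append, edges_cons]; rfl
  have hce : c.edges = q1.edges ++ (s(t.fst, b) :: (q3.edges.reverse ++ [s(t.snd, a)])) := by
    rw [hc, edges_append, edges_cons, hW2, edges_append, edges_cons, edges_nil, edges_reverse]
  have hpend : (q1.append (Walk.cons h q3)).edges.Nodup :=
    edges_nodup_of_support_nodup hp.isPath.support_nodup
  rw [hpe, List.nodup_append] at hpend
  obtain ⟨hq1nd, hq3nd', hedisj⟩ := hpend
  have hq3nd : q3.edges.Nodup := (List.nodup_cons.mp hq3nd').2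
  -- new edges are fresh
  have hxb1 : s(t.fst, b) ∉ q1.edges := fun hmem => hbq1 (q1.snd_mem_support_of_mem_edges hmem)
  have hxb3 : s(t.fst, b) ∉ q3.edges := fun hmem => hxq3 (q3.fst_mem_support_of_mem_edges hmem)
  have hya1 : s(t.snd, a) ∉ q1.edges := fun hmem => hyq1 (q1.fst_mem_support_of_mem_edges hmem)
  have hya3 : s(t.snd, a) ∉ q3.edges := fun hmem => haq3 (q3.snd_mem_support_of_mem_edges hmem)
  have hxbya : s(t.fst, b) ≠ s(t.snd, a) := by
    intro heq
    rcases Sym2.eq_iff.mp heq with ⟨h1, rfl⟩ | ⟨rfl, rfl⟩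
    · exact h.ne h1
    · exact hnadj ha
  have hcend : c.edges.Nodup := by
    rw [hce]
    rw [List.nodup_append]
    refine ⟨hq1nd, ?_, ?_⟩
    · rw [List.nodup_cons, List.nodup_append]
      refine ⟨?_, List.nodup_reverse.mpr hq3nd, by simp, ?_⟩
      · intro hmem
        rcases List.mem_append.mp hmem with h1 | h2
        · exact hxb3 (List.mem_reverse.mp h1)
        · exact hxbya (List.mem_singleton.mp h2)
      · intro e he1 e' he2 hee
        subst hee
        rw [List.mem_reverse] at he1
        rw [List.mem_singleton] at he2
        exact hya3 (he2 ▸ he1)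
    · intro e he1 e' he2 hee
      subst hee
      rcases List.mem_cons.mp he2 with rfl | he3
      · exact hxb1 he1
      · rcases List.mem_append.mp he3 with h1 | h2
        · exact hedisj _ he1 _ (List.mem_cons_of_mem _ (List.mem_reverse.mp h1)) rfl
        · exact hya1 ((List.mem_singleton.mp h2) ▸ he1)
  -- conclude
  have hcnil : c ≠ Walk.nil := by
    intro hnil
    have : c.length = 0 := by rw [hnil]; rfl
    rw [hc, length_append, length_cons] at this
    omega
  have hcyc : c.IsCycle := by
    rw [isCycle_def, isTrail_def]
    exact ⟨hcend, hcnil, hperm.nodup_iff.mpr hp.isPath.support_nodup⟩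
  refine ⟨c, ?_, fun e he hne => ?_⟩
  · rw [isHamiltonianCycle_iff_isCycle_and_support_count_tail_eq_one]
    exact ⟨hcyc, fun z => by rw [hperm.count_eq]; exact hp z⟩
  · rw [hpe] at he
    rw [hce]
    rcases List.mem_append.mp he with h1 | h2
    · exact List.mem_append_left _ h1
    · rcases List.mem_cons.mp h2 with rfl | h3
      · exact absurd rfl hne
      · exact List.mem_append_right _ (List.mem_cons_of_mem _
          (List.mem_append_left _ (List.mem_reverse.mpr h3)))

end SimpleGraph.Walk

namespace SimpleGraph.Walk

/-- From a hamiltonian cycle through `u` using the edge `uv`, extract a hamiltonian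
path from `v` to `u` avoiding the edge `uv`. -/
lemma hamCycle_split [DecidableEq V] {G' : SimpleGraph V} {u v : V} (hne : u ≠ v)
    {d : G'.Walk u u} (hd : d.IsHamiltonianCycle) (hmem : s(u, v) ∈ d.edges) :
    ∃ p : G'.Walk v u, p.IsHamiltonian ∧ s(u, v) ∉ p.edges ∧
      ∀ e ∈ d.edges, e ≠ s(u, v) → e ∈ p.edges := by
  have hnotnil : ¬ d.Nil := by
    intro h
    rw [nil_iff_eq_nil] at h
    subst h
    simp at hmem
  obtain ⟨w1, hadj, q, rfl⟩ := not_nil_iff.mp hnotnil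
  have hiff := isHamiltonianCycle_iff_isCycle_and_support_count_tail_eq_one.mp hd
  obtain ⟨hq, hq2⟩ := (cons_isCycle_iff q hadj).mp hiff.1
  have hcounts : ∀ z, q.support.count z = 1 := by
    intro z
    have := hiff.2 z
    rwa [support_cons, List.tail_cons] at this
  have hde : (Walk.cons hadj q).edges = s(u, w1) :: q.edges := rfl
  by_cases hw : w1 = v
  · subst hw
    refine ⟨q, hcounts, hq2, fun e he hne' => ?_⟩
    rw [hde] at he
    rcases List.mem_cons.mp he with rfl | h3
    · exact absurd rfl hne'
    · exact h3
  · -- s(u,v) is in q.edges; decompose q at its end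
    have hqe : s(u, v) ∈ q.edges := by
      rw [hde] at hmem
      rcases List.mem_cons.mp hmem with heq | h3
      · exfalso
        rcases Sym2.eq_iff.mp heq with ⟨-, rfl⟩ | ⟨rfl, rfl⟩
        · exact hw rfl
        · exact hadj.ne rfl
      · exact h3
    have hqrev : s(u, v) ∈ q.reverse.edges := by rw [edges_reverse, List.mem_reverse]; exact hqe
    obtain ⟨h2, r, hqr⟩ := edge_start_eq (hq.reverse.support_nodup) hqrev
    -- q = r.reverse.append (cons h2.symm nil)
    have hqeq : q = r.reverse.append (Walk.cons h2.symm Walk.nil) := by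
      have := congrArg Walk.reverse hqr
      rwa [reverse_reverse, reverse_cons] at this
    subst hqeq
    refine ⟨r.append (Walk.cons hadj.symm Walk.nil), ?_, ?_, ?_⟩
    · -- hamiltonian: same support counts
      intro z
      have := hcounts z
      rw [support_append, support_reverse, support_cons, support_nil, List.tail_cons] at this
      rw [support_append, support_cons, support_nil, List.tail_cons]
      rw [List.count_append, List.count_reverse] at this
      rw [List.count_append]
      exact this
    · -- s(u,v) not among new edges
      have hqnd : (r.reverse.append (Walk.cons h2.symm Walk.nil)).edges.Nodup :=
        edges_nodup_of_support_nodup hq.support_nodup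
      rw [edges_append, edges_reverse, edges_cons, edges_nil, List.nodup_append] at hqnd
      intro hmem'
      rw [edges_append, edges_cons, edges_nil] at hmem'
      rcases List.mem_append.mp hmem' with h3 | h4
      · -- s(u,v) ∈ r.edges, but also appears as last edge: contradicts nodup
        exact hqnd.2.2 _ (List.mem_reverse.mpr h3) s(v, u) (by simp) Sym2.eq_swap
      · -- s(u,v) = s(w1,u) → v = w1
        rw [List.mem_singleton] at h4
        rcases Sym2.eq_iff.mp h4 with ⟨-, h5⟩ | ⟨-, h5⟩
        · exact hne h5.symm
        · exact hw h5.symm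
    · -- all other edges survive
      intro e he hne'
      rw [hde, edges_append, edges_reverse, edges_cons, edges_nil] at he
      rw [edges_append, edges_cons, edges_nil]
      rcases List.mem_cons.mp he with rfl | h3
      · -- e = s(u,w1) = s(w1,u)
        exact List.mem_append_right _ (by simp [Sym2.eq_swap])
      · rcases List.mem_append.mp h3 with h4 | h5
        · exact List.mem_append_left _ (List.mem_reverse.mp h4)
        · rw [List.mem_singleton] at h5
          exact absurd (h5.trans (Sym2.eq_swap)) hne'

/-- Extraction: a hamiltonian cycle of `H ⊔ edge u v` through all of `F`'s edges yields
either a hamiltonian cycle of `H` through `F`, or a hamiltonian path of `H` from `v` to `u`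
through `F`'s edges. -/
lemma extract_path [DecidableEq V] {H : SimpleGraph V} {u v : V} (hne : u ≠ v)
    (hnadj : ¬ H.Adj u v) {w : V} {c : (H ⊔ edge u v).Walk w w}
    (hc : c.IsHamiltonianCycle) {F : SimpleGraph V} (hF : F ≤ H)
    (hFe : ∀ e ∈ F.edgeSet, e ∈ c.edges) :
    (∃ (x : V) (c' : H.Walk x x), c'.IsHamiltonianCycle ∧ ∀ e ∈ F.edgeSet, e ∈ c'.edges) ∨
    (∃ p : H.Walk v u, p.IsHamiltonian ∧ ∀ e ∈ F.edgeSet, e ∈ p.edges) := by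
  have hedge : ∀ e ∈ (H ⊔ edge u v).edgeSet, e ≠ s(u, v) → e ∈ H.edgeSet := by
    intro e hee hne'
    rw [edgeSet_sup, Set.mem_union, edge_edgeSet_of_ne hne] at hee
    rcases hee with h1 | h2
    · exact h1
    · exact absurd h2 hne'
  have hFne : ∀ e ∈ F.edgeSet, e ≠ s(u, v) := by
    intro e heF heq
    rw [heq] at heF
    exact hnadj (hF ((SimpleGraph.mem_edgeSet _).mp heF))
  by_cases hmem : s(u, v) ∈ c.edges
  · right
    have hu : u ∈ c.support := hc.mem_support u
    have hd := hc.rotate' hu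
    have hmem' : s(u, v) ∈ (c.rotate u hu).edges := (rotate_edges c u hu).mem_iff.mpr hmem
    obtain ⟨p0, hp0, hp0e, hp0all⟩ := hamCycle_split hne hd hmem'
    have htr : ∀ e ∈ p0.edges, e ∈ H.edgeSet := by
      intro e hee
      refine hedge e (p0.edges_subset_edgeSet hee) ?_
      intro rfl'
      exact hp0e (rfl' ▸ hee)
    refine ⟨p0.transfer H htr, ?_, ?_⟩
    · intro z
      rw [support_transfer]
      exact hp0 z
    · intro e heF
      rw [edges_transfer]
      exact hp0all e ((rotate_edges c u hu).mem_iff.mpr (hFe e heF)) (hFne e heF)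
  · left
    have htr : ∀ e ∈ c.edges, e ∈ H.edgeSet := by
      intro e hee
      refine hedge e (c.edges_subset_edgeSet hee) ?_
      intro rfl'
      exact hmem (rfl' ▸ hee)
    refine ⟨w, c.transfer H htr, hc.transfer' htr, ?_⟩
    intro e heF
    rw [edges_transfer]
    exact hFe e heF

end SimpleGraph.Walk

/-- Every edge-nonempty acyclic graph has a leaf. -/
lemma exists_leaf [Fintype V] [DecidableEq V] {F : SimpleGraph V} (hac : F.IsAcyclic)
    {u0 w0 : V} (h0 : F.Adj u0 w0) : ∃ u w, F.Adj u w ∧ ∀ z, F.Adj u z → z = w := by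
  by_contra hno
  push_neg at hno
  have key : ∀ i : ℕ, ∃ (aa bb : V) (p : F.Walk aa bb), p.IsPath ∧ 1 ≤ p.length ∧ i ≤ p.length := by
    intro i
    induction i with
    | zero => exact ⟨u0, w0, Walk.cons h0 Walk.nil, by simp [h0.ne], by simp, by simp⟩
    | succ i ih =>
      obtain ⟨aa, bb, p, hp, h1, hi⟩ := ih
      by_cases hext : ∃ z, F.Adj aa z ∧ z ∉ p.support
      · obtain ⟨z, hz, hzs⟩ := hext
        refine ⟨z, bb, Walk.cons hz.symm p, hp.cons hzs, by simp, ?_⟩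
        rw [Walk.length_cons]
        omega
      · exfalso
        push_neg at hext
        have hnn : ¬ p.Nil := Walk.not_nil_iff_lt_length.mpr (by omega)
        obtain ⟨z0, h', q, rfl⟩ := Walk.not_nil_iff.mp hnn
        obtain ⟨z, hz, hzne⟩ := hno aa z0 h'
        have hzs : z ∈ q.support := by
          have hm := hext z hz
          rw [Walk.support_cons] at hm
          rcases List.mem_cons.mp hm with heq | h
          · subst heq; exact absurd hz F.irrefl
          · exact h
        obtain ⟨hqp, haq⟩ := (Walk.cons_isPath_iff h' q).mp hp
        have hrp : (q.takeUntil z hzs).IsPath := hqp.takeUntil hzs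
        have hrs : (q.takeUntil z hzs).support ⊆ q.support := q.support_takeUntil_subset hzs
        have har : aa ∉ (q.takeUntil z hzs).support := fun hm => haq (hrs hm)
        have hip : ((q.takeUntil z hzs).append (Walk.cons hz.symm Walk.nil)).IsPath := by
          rw [Walk.isPath_def, Walk.support_append, Walk.support_cons, Walk.support_nil,
            List.tail_cons]
          rw [List.nodup_append]
          exact ⟨hrp.support_nodup, List.nodup_singleton _,
            fun x hx y hx2 hxy => by subst hxy; exact har ((List.mem_singleton.mp hx2) ▸ hx)⟩
        have hcyc : (Walk.cons h' ((q.takeUntil z hzs).append (Walk.cons hz.symm Walk.nil))).IsCycle := by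
          rw [Walk.cons_isCycle_iff]
          refine ⟨hip, ?_⟩
          rw [Walk.edges_append, Walk.edges_cons, Walk.edges_nil]
          intro hm
          rcases List.mem_append.mp hm with hmm | hmm
          · exact har ((q.takeUntil z hzs).fst_mem_support_of_mem_edges hmm)
          · rw [List.mem_singleton] at hmm
            rcases Sym2.eq_iff.mp hmm with ⟨h3, -⟩ | ⟨-, h4⟩
            · exact hz.ne h3
            · exact hzne h4.symm
        exact hac _ hcyc
  obtain ⟨aa, bb, p, hp, -, hi⟩ := key (Fintype.card V)
  have := hp.length_lt
  omega

/-- The top walk along a list. -/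
def topWalk : (x : V) → (l : List V) → (a : V) → ((x :: l).Nodup) → (a ∉ x :: l) →
    (⊤ : SimpleGraph V).Walk x a
  | x, [], a, _, ha =>
      Walk.cons (by simp only [top_adj]; intro h; exact ha (by simp [h])) Walk.nil
  | x, y :: l', a, h, ha =>
      Walk.cons (show (⊤ : SimpleGraph V).Adj x y by
          simp only [top_adj]
          intro heq
          exact (List.nodup_cons.mp h).1 (heq ▸ List.mem_cons_self))
        (topWalk y l' a (List.nodup_cons.mp h).2 (fun hm => ha (List.mem_cons_of_mem _ hm)))

lemma topWalk_support : ∀ (l : List V) (x a : V) (h : (x :: l).Nodup) (ha : a ∉ x :: l),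
    (topWalk x l a h ha).support = x :: (l ++ [a])
  | [], x, a, h, ha => by simp [topWalk]
  | y :: l', x, a, h, ha => by
      simp only [topWalk, Walk.support_cons, topWalk_support l']
      simp

lemma topWalk_edges : ∀ (l : List V) (x a : V) (h : (x :: l).Nodup) (ha : a ∉ x :: l),
    (topWalk x l a h ha).edges = listEdges (x :: (l ++ [a]))
  | [], x, a, h, ha => by simp [topWalk]
  | y :: l', x, a, h, ha => by
      simp only [topWalk, Walk.edges_cons, topWalk_edges l']
      simp

lemma arrangement [Fintype V] [DecidableEq V] :
    ∀ (j : ℕ) (F : SimpleGraph V), F.IsAcyclic →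
      (∀ v a b c : V, F.Adj v a → F.Adj v b → F.Adj v c → a = b ∨ a = c ∨ b = c) →
      F.edgeSet.ncard = j →
      ∃ L : List V, L.Nodup ∧ (∀ z, z ∈ L) ∧ ∀ e ∈ F.edgeSet, e ∈ listEdges L := by
  intro j
  induction j with
  | zero =>
    intro F hac hdeg hcard
    have hempty : F.edgeSet = ∅ := (Set.ncard_eq_zero (Set.toFinite _)).mp hcard
    refine ⟨Finset.univ.toList, Finset.nodup_toList _, fun z => by simp, ?_⟩
    intro e he
    rw [hempty] at he
    exact absurd he (Set.notMem_empty e)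
  | succ j ih =>
    intro F hac hdeg hcard
    have hne : F.edgeSet.Nonempty := Set.nonempty_of_ncard_ne_zero (by omega)
    have hex : ∃ x y, s(x, y) ∈ F.edgeSet := by
      obtain ⟨e0, he0⟩ := hne
      induction e0 using Sym2.ind with
      | _ x y => exact ⟨x, y, he0⟩
    obtain ⟨u0, w0, h0mem⟩ := hex
    have h0 : F.Adj u0 w0 := (mem_edgeSet _).mp h0mem
    obtain ⟨u, w, huw, hleaf⟩ := exists_leaf hac h0
    set F' := F.deleteEdges {s(u, w)} with hF'
    have hF'le : F' ≤ F := deleteEdges_le _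
    have hF'adj : ∀ x y, F'.Adj x y ↔ F.Adj x y ∧ s(x, y) ≠ s(u, w) := by
      intro x y
      rw [hF', deleteEdges_adj]
      simp
    have hF'ac : F'.IsAcyclic := by
      intro v c hcyc
      have hsub : ∀ e ∈ c.edges, e ∈ F.edgeSet := by
        intro e hee
        exact (edgeSet_subset_edgeSet.mpr hF'le) (c.edges_subset_edgeSet hee)
      exact hac _ (hcyc.transfer' hsub)
    have hF'deg : ∀ v a b c : V, F'.Adj v a → F'.Adj v b → F'.Adj v c → a = b ∨ a = c ∨ b = c :=
      fun v a b c h1 h2 h3 => hdeg v a b c (hF'le h1) (hF'le h2) (hF'le h3)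
    have hF'E : F'.edgeSet = F.edgeSet \ {s(u, w)} := by
      rw [hF', edgeSet_deleteEdges]
    have hF'card : F'.edgeSet.ncard = j := by
      rw [hF'E, Set.ncard_diff_singleton_of_mem ((mem_edgeSet _).mpr huw), hcard]
      omega
    obtain ⟨L', hnd', hmem', hedges'⟩ := ih F' hF'ac hF'deg hF'card
    -- u is isolated in F'
    have hu_iso : ∀ z, ¬ F'.Adj u z := by
      intro z hz
      rw [hF'adj] at hz
      exact hz.2 (by rw [hleaf z hz.1])
    have hu_e : ∀ e ∈ F'.edgeSet, u ∉ e := by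
      intro e he hmemu
      obtain ⟨y, rfl⟩ := Sym2.mem_iff_exists.mp hmemu
      exact hu_iso y ((mem_edgeSet _).mp he)
    -- w has at most one F'-neighbour
    have hwu : w ≠ u := huw.ne'
    have hw_unique : ∀ z1 z2, F'.Adj w z1 → F'.Adj w z2 → z1 = z2 := by
      intro z1 z2 h1 h2
      rw [hF'adj] at h1 h2
      have hz1u : z1 ≠ u := by
        rintro rfl
        exact h1.2 (Sym2.eq_swap)
      have hz2u : z2 ≠ u := by
        rintro rfl
        exact h2.2 (Sym2.eq_swap)
      rcases hdeg w z1 z2 u h1.1 h2.1 huw.symm with h | h | h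
      · exact h
      · exact absurd h hz1u
      · exact absurd h hz2u
    set L'' := L'.erase u with hL''def
    have hL''nd : L''.Nodup := hnd'.erase u
    have huL'' : u ∉ L'' := hnd'.not_mem_erase
    have hwL'' : w ∈ L'' := (List.mem_erase_of_ne hwu).mpr (hmem' w)
    have hedges'' : ∀ e ∈ F'.edgeSet, e ∈ listEdges L'' := by
      intro e he
      exact listEdges_erase (hu_e e he) (hedges' e he)
    obtain ⟨A, B, hAB⟩ := List.append_of_mem hwL''
    -- membership in F.edgeSet
    have hFE : ∀ e ∈ F.edgeSet, e = s(u, w) ∨ e ∈ F'.edgeSet := by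
      intro e he
      by_cases heq : e = s(u, w)
      · exact Or.inl heq
      · exact Or.inr (by rw [hF'E]; exact ⟨he, heq⟩)
    -- common facts for the two candidate lists
    have hL''perm : ∀ (M : List V), M.Perm (u :: L'') →
        M.Nodup ∧ (∀ z, z ∈ M) := by
      intro M hperm
      constructor
      · exact hperm.nodup_iff.mpr (List.nodup_cons.mpr ⟨huL'', hL''nd⟩)
      · intro z
        rw [hperm.mem_iff]
        by_cases hz : z = u
        · exact List.mem_cons.mpr (Or.inl hz)
        · exact List.mem_cons_of_mem _ ((List.mem_erase_of_ne hz).mpr (hmem' z))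
    match B, hAB with
    | [], hAB =>
      have hpermB : (A ++ [w, u]).Perm (u :: L'') := by
        rw [hAB]
        calc A ++ [w, u] = (A ++ [w]) ++ u :: [] := by simp
          _ ~ u :: ((A ++ [w]) ++ []) := List.perm_middle
          _ = u :: (A ++ w :: []) := by simp
      refine ⟨A ++ [w, u], ?_, ?_, ?_⟩
      · exact (hL''perm _ hpermB).1
      · exact (hL''perm _ hpermB).2
      · intro e he
        have hsplit : listEdges (A ++ [w, u]) =
            listEdges (A ++ [w]) ++ listEdges [w, u] := by
          have := listEdges_append_cons A w [u]
          simpa using this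
        rcases hFE e he with rfl | he'
        · rw [hsplit]
          refine List.mem_append_right _ ?_
          simp [Sym2.eq_swap]
        · have := hedges'' e he'
          rw [hAB] at this
          rw [hsplit]
          exact List.mem_append_left _ (by simpa using this)
    | bb :: B', hAB =>
      have horig : listEdges L'' = listEdges (A ++ [w]) ++ listEdges (w :: bb :: B') := by
        rw [hAB]; exact listEdges_append_cons A w (bb :: B')
      by_cases hwbb : s(w, bb) ∈ F'.edgeSet
      · -- insert u before w
        refine ⟨A ++ u :: w :: bb :: B', ?_, ?_, ?_⟩
        · exact (hL''perm _ (by rw [hAB]; exact List.perm_middle)).1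
        · exact (hL''perm _ (by rw [hAB]; exact List.perm_middle)).2
        · intro e he
          have hsplit : listEdges (A ++ u :: w :: bb :: B') =
              listEdges (A ++ [u]) ++ (s(u, w) :: s(w, bb) :: listEdges (bb :: B')) := by
            rw [listEdges_append_cons A u (w :: bb :: B')]
            simp
          rw [hsplit]
          rcases hFE e he with rfl | he'
          · exact List.mem_append_right _ (List.mem_cons_self)
          · have hin := hedges'' e he'
            rw [horig] at hin
            rcases List.mem_append.mp hin with hin1 | hin2
            · -- e ∈ listEdges (A ++ [w]): either inside A or the last pair s(last,w)
              match A, hin1 with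
              | [], hin1 => simp at hin1
              | a0 :: A0, hin1 =>
                rw [listEdges_concat a0 A0 w] at hin1
                rcases List.mem_append.mp hin1 with hin3 | hin4
                · refine List.mem_append_left _ ?_
                  rw [listEdges_concat a0 A0 u]
                  exact List.mem_append_left _ hin3
                · exfalso
                  rw [List.mem_singleton] at hin4
                  -- e = s(last, w) ∈ F', and s(w,bb) ∈ F': two neighbours of w
                  have hlastw : F'.Adj ((a0 :: A0).getLast (by simp)) w := by
                    rw [← mem_edgeSet, ← hin4]
                    exact he'
                  have hbbw : F'.Adj w bb := (mem_edgeSet _).mp hwbb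
                  have heqlast := hw_unique _ _ hlastw.symm hbbw
                  -- contradiction with nodup of L'' = A ++ w :: bb :: B'
                  have hndL : ((a0 :: A0) ++ w :: bb :: B').Nodup := by
                    rw [← hAB]; exact hL''nd
                  rw [List.nodup_append] at hndL
                  exact hndL.2.2 bb (heqlast ▸ List.getLast_mem (by simp))
                    bb (List.mem_cons_of_mem _ List.mem_cons_self) rfl
            · rcases List.mem_cons.mp hin2 with heq | hin3
              · exact List.mem_append_right _ (List.mem_cons_of_mem _ (heq ▸ List.mem_cons_self))
              · exact List.mem_append_right _
                  (List.mem_cons_of_mem _ (List.mem_cons_of_mem _ hin3))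
      · -- insert u after w
        refine ⟨A ++ w :: u :: bb :: B', ?_, ?_, ?_⟩
        · refine (hL''perm _ ?_).1
          rw [hAB]
          calc A ++ w :: u :: bb :: B' = (A ++ [w]) ++ u :: bb :: B' := by simp
            _ ~ u :: ((A ++ [w]) ++ bb :: B') := List.perm_middle
            _ = u :: (A ++ w :: bb :: B') := by simp
        · refine (hL''perm _ ?_).2
          rw [hAB]
          calc A ++ w :: u :: bb :: B' = (A ++ [w]) ++ u :: bb :: B' := by simp
            _ ~ u :: ((A ++ [w]) ++ bb :: B') := List.perm_middle
            _ = u :: (A ++ w :: bb :: B') := by simp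
        · intro e he
          have hsplit : listEdges (A ++ w :: u :: bb :: B') =
              listEdges (A ++ [w]) ++ (s(w, u) :: s(u, bb) :: listEdges (bb :: B')) := by
            rw [listEdges_append_cons A w (u :: bb :: B')]
            simp
          rw [hsplit]
          rcases hFE e he with rfl | he'
          · exact List.mem_append_right _ (by simp [Sym2.eq_swap])
          · have hin := hedges'' e he'
            rw [horig] at hin
            rcases List.mem_append.mp hin with hin1 | hin2
            · exact List.mem_append_left _ hin1
            · rcases List.mem_cons.mp hin2 with heq | hin3
              · exact absurd (heq ▸ he') hwbb
              · exact List.mem_append_right _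
                  (List.mem_cons_of_mem _ (List.mem_cons_of_mem _ hin3))

lemma top_hamCycleThrough [Fintype V] [DecidableEq V] (h3 : 3 ≤ Fintype.card V)
    (F : SimpleGraph V) (hac : F.IsAcyclic)
    (hdeg : ∀ v a b c : V, F.Adj v a → F.Adj v b → F.Adj v c → a = b ∨ a = c ∨ b = c) :
    ∃ (x : V) (c : (⊤ : SimpleGraph V).Walk x x), c.IsHamiltonianCycle ∧
      ∀ e ∈ F.edgeSet, e ∈ c.edges := by
  obtain ⟨L, hnd, hmem, hedges⟩ := arrangement F.edgeSet.ncard F hac hdeg rfl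
  have hlen : L.length = Fintype.card V := by
    have h1 : L.toFinset = Finset.univ :=
      Finset.eq_univ_iff_forall.mpr (fun z => List.mem_toFinset.mpr (hmem z))
    have h2 := List.toFinset_card_of_nodup hnd
    rw [h1] at h2
    simpa using h2.symm
  match L, hnd, hmem, hedges, hlen with
  | [], hnd, hmem, hedges, hlen => exfalso; simp at hlen; omega
  | [a], hnd, hmem, hedges, hlen => exfalso; simp at hlen; omega
  | [a, y], hnd, hmem, hedges, hlen => exfalso; simp at hlen; omega
  | a :: y :: z0 :: l0, hnd, hmem, hedges, hlen =>
    set l' := z0 :: l0 with hl'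
    have htail : (y :: l').Nodup := (List.nodup_cons.mp hnd).2
    have hanotin : a ∉ y :: l' := (List.nodup_cons.mp hnd).1
    set P := topWalk y l' a htail hanotin with hPdef
    have hPs : P.support = y :: (l' ++ [a]) := topWalk_support l' y a htail hanotin
    have hPe : P.edges = listEdges (y :: (l' ++ [a])) := topWalk_edges l' y a htail hanotin
    have hadj : (⊤ : SimpleGraph V).Adj a y := by
      rw [top_adj]
      intro heq
      exact hanotin (heq ▸ List.mem_cons_self)
    have hPnd : P.support.Nodup := by
      rw [hPs]
      have : (y :: (l' ++ [a])) = (y :: l') ++ [a] := by simp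
      rw [this, List.nodup_append]
      exact ⟨htail, List.nodup_singleton _,
        fun x hx y hx2 hxy => by
          rw [List.mem_singleton] at hx2
          subst hxy
          subst hx2
          exact hanotin hx⟩
    have hPpath : P.IsPath := (Walk.isPath_def _).mpr hPnd
    have hPnot : s(a, y) ∉ P.edges := by
      intro hmem'
      have hrev : s(a, y) ∈ P.reverse.edges := by
        rw [Walk.edges_reverse, List.mem_reverse]; exact hmem'
      obtain ⟨h, q, heq⟩ := SimpleGraph.Walk.edge_start_eq hPpath.reverse.support_nodup hrev
      have hqp : q.IsPath := ((Walk.cons_isPath_iff h q).mp (heq ▸ hPpath.reverse)).1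
      have hqnil : q = Walk.nil := Walk.isPath_iff_eq_nil.mp hqp
      have hlen2 : P.reverse.support.length = 2 := by
        rw [heq, hqnil]
        simp
      rw [Walk.support_reverse, List.length_reverse, hPs] at hlen2
      simp [hl'] at hlen2
    have hcyc : (Walk.cons hadj P).IsCycle := by
      rw [Walk.cons_isCycle_iff]
      exact ⟨hPpath, hPnot⟩
    refine ⟨a, Walk.cons hadj P, ?_, ?_⟩
    · rw [Walk.isHamiltonianCycle_iff_isCycle_and_support_count_tail_eq_one]
      refine ⟨hcyc, fun z => ?_⟩
      rw [Walk.support_cons, List.tail_cons, hPs]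
      have hperm : (y :: (l' ++ [a])).Perm (a :: y :: l') := by
        calc y :: (l' ++ [a]) = (y :: l') ++ a :: [] := by simp
          _ ~ a :: ((y :: l') ++ []) := List.perm_middle
          _ = a :: y :: l' := by simp
      rw [hperm.count_eq]
      exact List.count_eq_one_of_mem hnd (hmem z)
    · intro e he
      have hin := hedges e he
      rw [Walk.edges_cons]
      rcases List.mem_cons.mp hin with heq | hin2
      · exact List.mem_cons.mpr (Or.inl heq)
      · refine List.mem_cons_of_mem _ ?_
        rw [hPe]
        have : listEdges (y :: (l' ++ [a])) = listEdges (y :: l') ++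
            [s((y :: l').getLast (by simp), a)] := by
          have := listEdges_concat y l' a
          simpa using this
        rw [this]
        exact List.mem_append_left _ hin2

lemma two_mul_choose_two (x : ℕ) : 2 * x.choose 2 = x * (x - 1) := by
  rw [Nat.choose_two_right]
  have h2 : 2 ∣ x * (x - 1) := by
    cases x with
    | zero => simp
    | succ i =>
      have hev := Nat.even_mul_succ_self i
      have h : (i + 1) * (i + 1 - 1) = i * (i + 1) := by simp [Nat.mul_comm]
      rw [h]
      exact hev.two_dvd
  exact Nat.mul_div_cancel' h2

lemma cast_mul_pred (x : ℕ) : ((x * (x - 1) : ℕ) : ℤ) = (x : ℤ) * ((x : ℤ) - 1) := by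
  cases x with
  | zero => simp
  | succ i => push_cast; ring

/-- Convexity: the function `k ↦ C(n-k+ℓ,2) + (k-ℓ)k` on `[d,m]` is maximised at an endpoint. -/
lemma choose_quad_le_max {n d m k ℓ : ℕ} (hld : ℓ ≤ d) (hdk : d ≤ k) (hkm : k ≤ m) (hmn : m ≤ n) :
    (n - k + ℓ).choose 2 + (k - ℓ) * k ≤
      max ((n - d + ℓ).choose 2 + (d - ℓ) * d) ((n - m + ℓ).choose 2 + (m - ℓ) * m) := by
  rcases eq_or_lt_of_le hdk with rfl | hdk'
  · exact le_max_left _ _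
  rcases eq_or_lt_of_le hkm with rfl | hkm'
  · exact le_max_right _ _
  have hcast : ∀ j : ℕ, ℓ ≤ j → j ≤ n →
      ((2 * ((n - j + ℓ).choose 2 + (j - ℓ) * j) : ℕ) : ℤ) =
        ((n : ℤ) - j + ℓ) * ((n : ℤ) - j + ℓ - 1) + 2 * ((j : ℤ) - ℓ) * j := by
    intro j hl hn
    have h1 : (2 * ((n - j + ℓ).choose 2 + (j - ℓ) * j)) =
        (n - j + ℓ) * ((n - j + ℓ) - 1) + 2 * ((j - ℓ) * j) := by
      rw [Nat.mul_add, two_mul_choose_two]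
    rw [h1, Nat.cast_add, cast_mul_pred]
    push_cast [Nat.cast_sub hl, Nat.cast_sub hn]
    ring
  set gD : ℤ := ((n : ℤ) - d + ℓ) * ((n : ℤ) - d + ℓ - 1) + 2 * ((d : ℤ) - ℓ) * d with hgD
  set gM : ℤ := ((n : ℤ) - m + ℓ) * ((n : ℤ) - m + ℓ - 1) + 2 * ((m : ℤ) - ℓ) * m with hgM
  set gK : ℤ := ((n : ℤ) - k + ℓ) * ((n : ℤ) - k + ℓ - 1) + 2 * ((k : ℤ) - ℓ) * k with hgK
  have key : ((m : ℤ) - k) * gD + ((k : ℤ) - d) * gM - ((m : ℤ) - d) * gK =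
      3 * ((m : ℤ) - k) * ((k : ℤ) - d) * ((m : ℤ) - d) := by
    rw [hgD, hgM, hgK]; ring
  have hMK : (0 : ℤ) < (m : ℤ) - k := by
    simp only [sub_pos]; exact_mod_cast hkm'
  have hKD : (0 : ℤ) < (k : ℤ) - d := by
    simp only [sub_pos]; exact_mod_cast hdk'
  have hMD : (0 : ℤ) < (m : ℤ) - d := by linarith
  have hint : gK ≤ gD ∨ gK ≤ gM := by
    by_contra hcon
    push_neg at hcon
    obtain ⟨h1, h2⟩ := hcon
    nlinarith [key, mul_le_mul_of_nonneg_left h1.le hMK.le,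
      mul_le_mul_of_nonneg_left h2.le hKD.le,
      mul_pos (mul_pos hMK hKD) hMD]
  have e1 := hcast d hld (hdk.trans (hkm.trans hmn))
  have e2 := hcast m (hld.trans (hdk.trans hkm)) hmn
  have e3 := hcast k (hld.trans hdk) (hkm.trans hmn)
  rcases hint with h | h
  · refine le_max_of_le_left ?_
    have h3 : ((2 * ((n - k + ℓ).choose 2 + (k - ℓ) * k) : ℕ) : ℤ) ≤
        ((2 * ((n - d + ℓ).choose 2 + (d - ℓ) * d) : ℕ) : ℤ) := by rw [e1, e3]; exact h
    have h4 := Int.ofNat_le.mp (by exact_mod_cast h3)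
    omega
  · refine le_max_of_le_right ?_
    have h3 : ((2 * ((n - k + ℓ).choose 2 + (k - ℓ) * k) : ℕ) : ℤ) ≤
        ((2 * ((n - m + ℓ).choose 2 + (m - ℓ) * m) : ℕ) : ℤ) := by rw [e2, e3]; exact h
    have h4 := Int.ofNat_le.mp (by exact_mod_cast h3)
    omega

/-- Edge counting: if `W` is a set of vertices of degree at most `k`, then
`e(H) ≤ C(n - |W|, 2) + |W| k`. -/
lemma edge_count_by_lowdeg [Fintype V] [DecidableEq V] (H : SimpleGraph V) [DecidableRel H.Adj]
    (W : Finset V) (k : ℕ) (hW : ∀ w ∈ W, H.degree w ≤ k) :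
    H.edgeFinset.card ≤ (Fintype.card V - W.card).choose 2 + W.card * k := by
  classical
  set P : Sym2 V → Prop := fun e => ∃ x ∈ e, x ∈ W with hP
  have hsplit := Finset.card_filter_add_card_filter_not (s := H.edgeFinset) (p := P)
  -- edges touching W
  have htouch : (H.edgeFinset.filter P).card ≤ W.card * k := by
    have hsub : H.edgeFinset.filter P ⊆ W.biUnion (fun w => H.incidenceFinset w) := by
      intro e he
      rw [Finset.mem_filter] at he
      obtain ⟨x, hx, hxW⟩ := he.2
      refine Finset.mem_biUnion.mpr ⟨x, hxW, ?_⟩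
      rw [mem_incidenceFinset]
      exact ⟨(mem_edgeFinset.mp he.1 : e ∈ H.edgeSet), hx⟩
    calc (H.edgeFinset.filter P).card ≤ _ := Finset.card_le_card hsub
      _ ≤ ∑ w ∈ W, (H.incidenceFinset w).card := Finset.card_biUnion_le
      _ ≤ ∑ w ∈ W, k := by
          refine Finset.sum_le_sum fun w hw => ?_
          rw [card_incidenceFinset_eq_degree]
          exact hW w hw
      _ = W.card * k := by rw [Finset.sum_const, smul_eq_mul]
  -- edges inside the complement
  have hinside : (H.edgeFinset.filter (fun e => ¬ P e)).card ≤
      (Fintype.card V - W.card).choose 2 := by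
    set H2 : SimpleGraph V :=
      { Adj := fun x y => H.Adj x y ∧ x ∉ W ∧ y ∉ W
        symm := ⟨fun x y h => ⟨h.1.symm, h.2.2, h.2.1⟩⟩
        loopless := ⟨fun x h => H.irrefl h.1⟩ } with hH2
    have hH2adj : ∀ x y, H2.Adj x y ↔ H.Adj x y ∧ x ∉ W ∧ y ∉ W := fun x y => Iff.rfl
    have hE : H2.edgeFinset = H.edgeFinset.filter (fun e => ¬ P e) := by
      ext e
      induction e using Sym2.ind with
      | _ x y =>
        rw [Finset.mem_filter, mem_edgeFinset, mem_edgeFinset, mem_edgeSet, mem_edgeSet, hH2adj,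
          hP]
        simp only [Sym2.mem_iff]
        constructor
        · rintro ⟨h1, h2, h3⟩
          refine ⟨h1, ?_⟩
          rintro ⟨z, (rfl | rfl), hz⟩
          · exact h2 hz
          · exact h3 hz
        · rintro ⟨h1, h2⟩
          push_neg at h2
          exact ⟨h1, h2 x (Or.inl rfl), h2 y (Or.inr rfl)⟩
    have hdeg : ∀ v, H2.degree v ≤ if v ∈ W then 0 else (Fintype.card V - W.card - 1) := by
      intro v
      by_cases hv : v ∈ W
      · simp only [hv, if_true]
        rw [← Finset.card_empty]
        apply Finset.card_le_card
        intro x hx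
        rw [mem_neighborFinset] at hx
        exact absurd hv hx.2.1
      · simp only [hv, if_false]
        have hsub : H2.neighborFinset v ⊆ Wᶜ.erase v := by
          intro x hx
          rw [mem_neighborFinset] at hx
          refine Finset.mem_erase.mpr ⟨hx.ne', Finset.mem_compl.mpr hx.2.2⟩
        calc (H2.neighborFinset v).card ≤ (Wᶜ.erase v).card := Finset.card_le_card hsub
          _ = Wᶜ.card - 1 := Finset.card_erase_of_mem (Finset.mem_compl.mpr hv)
          _ = Fintype.card V - W.card - 1 := by rw [Finset.card_compl]
    have hsum : ∑ v, H2.degree v ≤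
        (Fintype.card V - W.card) * (Fintype.card V - W.card - 1) := by
      calc ∑ v, H2.degree v
          ≤ ∑ v, (if v ∈ W then 0 else (Fintype.card V - W.card - 1)) :=
            Finset.sum_le_sum fun v _ => hdeg v
        _ = ∑ v ∈ Finset.univ.filter (· ∉ W), (Fintype.card V - W.card - 1) := by
            rw [Finset.sum_ite]
            simp
        _ = (Fintype.card V - W.card) * (Fintype.card V - W.card - 1) := by
            rw [Finset.sum_const, smul_eq_mul]
            congr 1
            have : Finset.univ.filter (· ∉ W) = Wᶜ := by ext x; simp
            rw [this, Finset.card_compl]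
    rw [← hE]
    have h2e := H2.sum_degrees_eq_twice_card_edges
    have hch := two_mul_choose_two (Fintype.card V - W.card)
    omega
  omega

end Aux

open SimpleGraph Walk

/-- If `0 ≤ ℓ < d ≤ ⌊(n+ℓ-1)/2⌋` and `G` is an `n`-vertex graph with minimum degree at least
`d` which is not `ℓ`-hamiltonian, then `e(G) ≤ max{h(n,d,ℓ), h(n,⌊(n+ℓ-1)/2⌋,ℓ)}`. -/
theorem edge_count_not_lHamiltonian {n d ℓ : ℕ} (hld : ℓ < d) (hd : d ≤ (n + ℓ - 1) / 2)
    (G : SimpleGraph (Fin n)) [DecidableRel G.Adj]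
    (hmin : ∀ v : Fin n, d ≤ G.degree v) (hham : ¬ G.IsLHamiltonian ℓ) :
    G.edgeSet.ncard ≤ max (hfun n d ℓ) (hfun n ((n + ℓ - 1) / 2) ℓ) := by
  classical
  set m := (n + ℓ - 1) / 2 with hmdef
  have h2d : 2 * d ≤ n + ℓ - 1 := by
    have := (Nat.le_div_iff_mul_le (by norm_num : 0 < 2)).mp hd
    omega
  have hn3 : ℓ + 3 ≤ n := by omega
  have hcardV : Fintype.card (Fin n) = n := Fintype.card_fin n
  -- a maximal non-ℓ-hamiltonian supergraph H of G
  obtain ⟨H, hHS, hHmax⟩ := Set.Finite.exists_maximalFor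
    (fun H : SimpleGraph (Fin n) => H.edgeSet.ncard)
    {H | G ≤ H ∧ ¬ H.IsLHamiltonian ℓ} (Set.toFinite _) ⟨G, le_refl G, hham⟩
  obtain ⟨hGH, hHnl⟩ := hHS
  -- saturation
  have hsat : ∀ u v : Fin n, u ≠ v → ¬ H.Adj u v → (H ⊔ edge u v).IsLHamiltonian ℓ := by
    intro u v hne hnadj
    by_contra hnot
    have hmem : (H ⊔ edge u v) ∈ {H | G ≤ H ∧ ¬ H.IsLHamiltonian ℓ} :=
      ⟨hGH.trans le_sup_left, hnot⟩
    have hlt : H < H ⊔ edge u v := by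
      refine lt_of_le_of_ne le_sup_left ?_
      intro heq
      have : (H ⊔ edge u v).Adj u v := by
        rw [sup_adj, edge_adj]
        exact Or.inr ⟨Or.inl ⟨rfl, rfl⟩, hne⟩
      rw [← heq] at this
      exact hnadj this
    have hcard : H.edgeSet.ncard < (H ⊔ edge u v).edgeSet.ncard :=
      Set.ncard_lt_ncard (edgeSet_ssubset_edgeSet.mpr hlt) (Set.toFinite _)
    have : (H ⊔ edge u v).edgeSet.ncard ≤ H.edgeSet.ncard := hHmax hmem (le_of_lt hcard)
    omega
  -- H is not complete
  have hHne : H ≠ ⊤ := by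
    intro heq
    apply hHnl
    intro F hF hlin hcard
    subst heq
    exact top_hamCycleThrough (by omega) F hlin.1 hlin.2
  -- a non-adjacent pair
  have hpair : ∃ u v : Fin n, u ≠ v ∧ ¬ H.Adj u v := by
    by_contra hall
    push_neg at hall
    apply hHne
    ext u v
    simp only [top_adj]
    exact ⟨fun h => h.ne, fun h => hall u v h⟩
  obtain ⟨u, v, huv, hnadjuv⟩ := hpair
  -- the witness linear forest F
  rw [SimpleGraph.IsLHamiltonian] at hHnl
  push_neg at hHnl
  obtain ⟨F, hFH, hFlin, hFcard, NoCyc⟩ := hHnl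
  -- a hamiltonian path between a non-adjacent pair through F
  set P : Fin n → Fin n → Prop := fun a b => ¬H.Adj a b ∧ a ≠ b ∧
    ∃ p : H.Walk a b, p.IsHamiltonian ∧ ∀ e ∈ F.edgeSet, e ∈ p.edges with hPdef
  have hNoCyc : ∀ (x : Fin n) (c : H.Walk x x), c.IsHamiltonianCycle →
      ¬ (∀ e ∈ F.edgeSet, e ∈ c.edges) := by
    intro x c hcyc hall
    obtain ⟨e, he, hne⟩ := NoCyc x c hcyc
    exact hne (hall e he)
  have hPvu : P v u := by
    obtain ⟨w, c, hc, hce⟩ := hsat u v huv hnadjuv F (hFH.trans le_sup_left) hFlin hFcard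
    rcases Walk.extract_path huv hnadjuv hc hFH hce with ⟨x, c', hcyc', hed⟩ | ⟨p, hp, hpe⟩
    · exact absurd hed (hNoCyc x c' hcyc')
    · exact ⟨fun h => hnadjuv h.symm, huv.symm, p, hp, hpe⟩
  have hPsymm : ∀ a b, P a b → P b a := by
    rintro a b ⟨h1, h2, p, hp, hpe⟩
    refine ⟨fun h => h1 h.symm, h2.symm, p.reverse, ?_, ?_⟩
    · intro z
      rw [Walk.support_reverse, List.count_reverse]
      exact hp z
    · intro e he
      rw [Walk.edges_reverse, List.mem_reverse]
      exact hpe e he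
  -- pick a maximal pair
  have hTne : (Finset.univ.filter (fun ab : Fin n × Fin n => P ab.1 ab.2)).Nonempty :=
    ⟨(v, u), Finset.mem_filter.mpr ⟨Finset.mem_univ _, hPvu⟩⟩
  obtain ⟨ab0, hab0T, hab0max⟩ := Finset.exists_max_image _
    (fun ab : Fin n × Fin n => H.degree ab.1 + H.degree ab.2) hTne
  rw [Finset.mem_filter] at hab0T
  have hmax0 : ∀ x y, P x y → H.degree x + H.degree y ≤ H.degree ab0.1 + H.degree ab0.2 := by
    intro x y hxy
    exact hab0max (x, y) (Finset.mem_filter.mpr ⟨Finset.mem_univ _, hxy⟩)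
  obtain ⟨a, b, hPab, hmaxab, hdegab⟩ : ∃ a b, P a b ∧
      (∀ x y, P x y → H.degree x + H.degree y ≤ H.degree a + H.degree b) ∧
      H.degree a ≤ H.degree b := by
    rcases le_total (H.degree ab0.1) (H.degree ab0.2) with h | h
    · exact ⟨ab0.1, ab0.2, hab0T.2, hmax0, h⟩
    · exact ⟨ab0.2, ab0.1, hPsymm _ _ hab0T.2,
        fun x y hxy => by have := hmax0 x y hxy; omega, h⟩
  obtain ⟨hnadjab, hneab, p, hp, hpF⟩ := hPab
  set k := H.degree a with hkdef
  have hdegmono : ∀ w : Fin n, G.degree w ≤ H.degree w := by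
    intro w
    apply Finset.card_le_card
    intro x hx
    rw [SimpleGraph.mem_neighborFinset] at hx ⊢
    exact hGH hx
  have hdk : d ≤ k := (hmin a).trans (hdegmono a)
  have hsupnd : p.support.Nodup := hp.isPath.support_nodup
  -- darts whose successor is a neighbour of a
  set D : Finset (H.Dart) := p.darts.toFinset.filter (fun t => H.Adj a t.snd) with hDdef
  have hDmem : ∀ t ∈ D, t ∈ p.darts ∧ H.Adj a t.snd := by
    intro t ht
    rw [hDdef, Finset.mem_filter, List.mem_toFinset] at ht
    exact ht
  have hDcard : D.card = k := by
    rw [hkdef]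
    apply Finset.card_bij (fun t _ => t.snd)
    · intro t ht
      rw [SimpleGraph.mem_neighborFinset]
      exact (hDmem t ht).2
    · intro t1 h1 t2 h2 heq
      exact Walk.dart_inj_snd hsupnd (hDmem t1 h1).1 (hDmem t2 h2).1 heq
    · intro w hw
      rw [SimpleGraph.mem_neighborFinset] at hw
      obtain ⟨t, ht, hts⟩ := Walk.exists_dart_snd (hp.mem_support w) (hw.ne' : w ≠ a)
      refine ⟨t, ?_, hts⟩
      rw [hDdef, Finset.mem_filter, List.mem_toFinset]
      exact ⟨ht, hts ▸ hw⟩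
  -- at most ℓ darts have their edge in F
  have hDbad : (D.filter (fun t => t.edge ∈ F.edgeSet)).card ≤ ℓ := by
    rw [← hFcard, Set.ncard_eq_toFinset_card F.edgeSet (Set.toFinite _)]
    apply Finset.card_le_card_of_injOn (fun t => t.edge)
    · intro t ht
      rw [Finset.mem_coe, Finset.mem_filter] at ht
      rw [Finset.mem_coe, Set.Finite.mem_toFinset]
      exact ht.2
    · intro t1 h1 t2 h2 heq
      rw [Finset.mem_coe, Finset.mem_filter] at h1 h2
      have hnd : (p.darts.map SimpleGraph.Dart.edge).Nodup := by
        have : p.darts.map SimpleGraph.Dart.edge = p.edges := rfl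
        rw [this]
        exact Walk.edges_nodup_of_support_nodup hsupnd
      exact List.inj_on_of_nodup_map hnd (hDmem t1 h1.1).1 (hDmem t2 h2.1).1 heq
  set Dgood := D.filter (fun t => t.edge ∉ F.edgeSet) with hDgooddef
  have hDgoodcard : k - ℓ ≤ Dgood.card := by
    have hsplit := Finset.card_filter_add_card_filter_not
      (s := D) (p := fun t => t.edge ∈ F.edgeSet)
    have h1 : (D.filter (fun t => ¬ t.edge ∈ F.edgeSet)).card = Dgood.card := rfl
    omega
  -- properties of good darts
  have hgood : ∀ t ∈ Dgood, ¬ H.Adj t.fst b ∧ H.degree t.fst ≤ k := by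
    intro t ht
    rw [hDgooddef, Finset.mem_filter] at ht
    obtain ⟨htD, hte⟩ := ht
    obtain ⟨htd, hts⟩ := hDmem t htD
    have hnadjtb : ¬ H.Adj t.fst b := by
      intro hadj
      obtain ⟨c, hcyc, hced⟩ := Walk.rotated_cycle hp hnadjab htd hts hadj
      apply hNoCyc a c hcyc
      intro e he
      refine hced e (hpF e he) ?_
      intro heq
      exact hte (heq ▸ he)
    refine ⟨hnadjtb, ?_⟩
    obtain ⟨p', hp', hp'e⟩ := Walk.rotated_path hp htd hts
    have hPtb : P t.fst b := by
      refine ⟨hnadjtb, Walk.dart_fst_ne_end hsupnd htd, p', hp', ?_⟩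
      intro e he
      refine hp'e e (hpF e he) ?_
      intro heq
      exact hte (heq ▸ he)
    have := hmaxab _ _ hPtb
    omega
  -- Ore-type bound: k + deg b ≤ n - 1 + ℓ
  have hOre : k + H.degree b ≤ n - 1 + ℓ := by
    set A' := D.image (fun t => t.fst) with hA'def
    have hA'card : A'.card = k := by
      rw [hA'def, Finset.card_image_of_injOn, hDcard]
      intro t1 h1 t2 h2 heq
      exact Walk.dart_inj_fst hsupnd (hDmem t1 (Finset.mem_coe.mp h1)).1
        (hDmem t2 (Finset.mem_coe.mp h2)).1 heq
    have hbA' : b ∉ A' := by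
      rw [hA'def]
      intro hb
      obtain ⟨t, ht, hteq⟩ := Finset.mem_image.mp hb
      exact Walk.dart_fst_ne_end hsupnd (hDmem t ht).1 hteq
    have hinter : (A' ∩ H.neighborFinset b).card ≤ ℓ := by
      have hsub2 : A' ∩ H.neighborFinset b ⊆
          (D.filter (fun t => t.edge ∈ F.edgeSet)).image (fun t => t.fst) := by
        intro x hx
        rw [Finset.mem_inter] at hx
        obtain ⟨hx1, hx2⟩ := hx
        obtain ⟨t, ht, hteq⟩ := Finset.mem_image.mp hx1
        rw [SimpleGraph.mem_neighborFinset] at hx2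
        have hadjtb : H.Adj t.fst b := by rw [hteq]; exact hx2.symm
        have htbad : t.edge ∈ F.edgeSet := by
          by_contra hte
          have htgood : t ∈ Dgood := by
            rw [hDgooddef, Finset.mem_filter]
            exact ⟨ht, hte⟩
          exact (hgood t htgood).1 hadjtb
        exact Finset.mem_image.mpr ⟨t, Finset.mem_filter.mpr ⟨ht, htbad⟩, hteq⟩
      calc (A' ∩ H.neighborFinset b).card
          ≤ ((D.filter (fun t => t.edge ∈ F.edgeSet)).image (fun t => t.fst)).card :=
            Finset.card_le_card hsub2
        _ ≤ (D.filter (fun t => t.edge ∈ F.edgeSet)).card := Finset.card_image_le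
        _ ≤ ℓ := hDbad
    have hunion : (A' ∪ H.neighborFinset b).card ≤ n - 1 := by
      have hsub : A' ∪ H.neighborFinset b ⊆ Finset.univ.erase b := by
        intro x hx
        rcases Finset.mem_union.mp hx with h | h
        · exact Finset.mem_erase.mpr ⟨fun heq => hbA' (heq ▸ h), Finset.mem_univ x⟩
        · refine Finset.mem_erase.mpr ⟨?_, Finset.mem_univ x⟩
          intro heq
          rw [SimpleGraph.mem_neighborFinset] at h
          exact H.irrefl (heq ▸ h)
      calc (A' ∪ H.neighborFinset b).card ≤ (Finset.univ.erase b).card :=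
            Finset.card_le_card hsub
        _ = n - 1 := by rw [Finset.card_erase_of_mem (Finset.mem_univ b)]; simp
    have := Finset.card_union_add_card_inter A' (H.neighborFinset b)
    have hdegb : (H.neighborFinset b).card = H.degree b := rfl
    omega
  have hkm : k ≤ m := by
    rw [hmdef]
    rw [Nat.le_div_iff_mul_le (by norm_num : 0 < 2)]
    omega
  -- the low-degree vertex set
  set W := Dgood.image (fun t => t.fst) with hWdef
  have hWcard : k - ℓ ≤ W.card := by
    rw [hWdef, Finset.card_image_of_injOn]
    · exact hDgoodcard
    · intro t1 h1 t2 h2 heq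
      rw [Finset.mem_coe, hDgooddef, Finset.mem_filter] at h1 h2
      exact Walk.dart_inj_fst hsupnd (hDmem t1 h1.1).1 (hDmem t2 h2.1).1 heq
  have hWdeg : ∀ x ∈ W, H.degree x ≤ k := by
    intro x hx
    obtain ⟨t, ht, hteq⟩ := Finset.mem_image.mp hx
    exact hteq ▸ (hgood t ht).2
  obtain ⟨W₀, hW₀sub, hW₀card⟩ := Finset.exists_subset_card_eq hWcard
  have hcount := edge_count_by_lowdeg H W₀ k (fun w hw => hWdeg w (hW₀sub hw))
  rw [hW₀card, hcardV] at hcount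
  have hkn : k ≤ n := by
    have := H.degree_lt_card_verts a
    rw [hcardV] at this
    omega
  have hsub_eq : n - (k - ℓ) = n - k + ℓ := by omega
  rw [hsub_eq] at hcount
  -- assemble
  have hGn : G.edgeSet.ncard ≤ H.edgeSet.ncard :=
    Set.ncard_le_ncard (edgeSet_mono hGH) (Set.toFinite _)
  have hHn : H.edgeSet.ncard = H.edgeFinset.card := by
    rw [← coe_edgeFinset H, Set.ncard_coe_finset]
  have hmn : m ≤ n := by omega
  have hfin := choose_quad_le_max (le_of_lt hld) hdk hkm hmn
  calc G.edgeSet.ncard ≤ H.edgeFinset.card := by omega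
    _ ≤ (n - k + ℓ).choose 2 + (k - ℓ) * k := hcount
    _ ≤ max ((n - d + ℓ).choose 2 + (d - ℓ) * d) ((n - m + ℓ).choose 2 + (m - ℓ) * m) := hfin
    _ = max (hfun n d ℓ) (hfun n m ℓ) := rfl
end

section
/- Let G be an n-vertex simple graph that is not ℓ-hamiltonian, and let u, v be nonadjacent vertices of G with deg(u) + deg(v) ≥ n + ℓ. Then the graph G + uv obtained by adding the edge uv is also not ℓ-hamiltonian. -/
open SimpleGraph

namespace SimpleGraph.Walk

variable {V : Type*} {G : SimpleGraph V}

/-- Split a walk at position `i`. -/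
lemma exists_split (p : G.Walk a b) (i : ℕ) (hi : i ≤ p.length) :
    ∃ (x : V) (q : G.Walk a x) (r : G.Walk x b),
      q.append r = p ∧ q.length = i ∧ x = p.getVert i := by
  induction p generalizing i with
  | nil =>
    have : i = 0 := by simpa using hi
    subst this
    exact ⟨_, .nil, .nil, rfl, rfl, rfl⟩
  | @cons a c b h p ih =>
    cases i with
    | zero => exact ⟨_, .nil, .cons h p, rfl, rfl, rfl⟩
    | succ j =>
      obtain ⟨x, q, r, hqr, hlen, hx⟩ := ih j (by simpa using hi)
      exact ⟨x, .cons h q, r, by rw [cons_append, hqr], by simp [hlen],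
        by simpa [getVert_cons_succ] using hx⟩

lemma getVert_injOn_of_nodup {p : G.Walk a b} (hp : p.support.Nodup) {i j : ℕ}
    (hi : i ≤ p.length) (hj : j ≤ p.length) (hij : p.getVert i = p.getVert j) : i = j := by
  wlog hlt : i < j generalizing i j
  · rcases Nat.lt_or_ge j i with h' | h'
    · exact (this hj hi hij.symm h').symm
    · omega
  exfalso
  obtain ⟨x, q, r, hqr, hlen, hx⟩ := p.exists_split i hi
  have hrlen : j - i ≤ r.length := by
    have := congrArg Walk.length hqr
    rw [length_append] at this
    omega
  have hj' : p.getVert j = r.getVert (j - i) := by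
    conv_lhs => rw [← hqr]
    rw [getVert_append, if_neg (by omega), hlen]
  cases r with
  | nil => simp at hrlen; omega
  | @cons _ z _ hadj r' =>
    have hxr' : x ∈ r'.support := by
      rw [mem_support_iff_exists_getVert]
      refine ⟨j - i - 1, ?_, by simpa [length_cons] using hrlen⟩
      rw [hx, hij, hj', getVert_cons _ _ (by omega)]
    have hsup : p.support = q.support ++ (r'.support) := by
      rw [← hqr, support_append, support_cons, List.tail_cons]
    rw [hsup] at hp
    exact (List.disjoint_of_nodup_append hp) (hx ▸ q.end_mem_support) hxr'

/-- If `u` occurs only at the end of a walk ending at `u` and `s(x,u)` is an edge of the walk,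
then the walk's last edge is `x`–`u`. -/
lemma eq_append_cons_of_mem_edges {z u x : V} (q : G.Walk z u) (hnd : q.support.Nodup)
    (he : s(x, u) ∈ q.edges) :
    ∃ (q' : G.Walk z x) (h : G.Adj x u), q = q'.append (Walk.cons h Walk.nil) := by
  induction q with
  | nil => simp at he
  | @cons z c u h p ih =>
    rw [support_cons, List.nodup_cons] at hnd
    rw [edges_cons, List.mem_cons] at he
    rcases he with he | he
    · -- s(x,u) = s(z,c)
      rw [Sym2.eq_iff] at he
      rcases he with ⟨rfl, rfl⟩ | ⟨hxc, huz⟩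
      · -- x = z, u = c : p : G.Walk u u with nodup support
        have : p = Walk.nil := isPath_iff_eq_nil.mp (IsPath.mk' hnd.2)
        subst this
        exact ⟨Walk.nil, h, rfl⟩
      · exact absurd (huz ▸ p.end_mem_support) hnd.1
    · obtain ⟨q', h', rfl⟩ := ih hnd.2 he
      exact ⟨Walk.cons h q', h', by rw [cons_append]⟩

end SimpleGraph.Walk

namespace SimpleGraph.Walk
variable {V : Type*} [DecidableEq V] {G : SimpleGraph V}

/-- From a hamiltonian cycle through the edge `u`–`v`, based at `u`, extract a hamiltonian
path from `v` to `u` whose edges are precisely the other edges of the cycle. -/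
lemma exists_hamPath_of_hamCycle {u v : V} (huv : u ≠ v) (c : G.Walk u u)
    (hc : c.IsHamiltonianCycle) (hmem : s(u, v) ∈ c.edges) :
    ∃ P : G.Walk v u, P.IsPath ∧ (∀ y, y ∈ P.support) ∧
      (∀ e ∈ c.edges, e ≠ s(u, v) → e ∈ P.edges) ∧
      (∀ e ∈ P.edges, e ∈ c.edges ∧ e ≠ s(u, v)) := by
  cases c with
  | nil => simp at hmem
  | @cons _ z _ h q =>
    have hnd : q.support.Nodup := by
      have := hc.isCycle.2
      rwa [support_cons, List.tail_cons] at this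
    have hcount : ∀ y, y ∈ q.support := by
      intro y
      have := hc.mem_support y
      rw [support_cons, List.mem_cons] at this
      rcases this with rfl | h' 
      · exact q.end_mem_support
      · exact h'
    obtain ⟨hq_path, h_uz_notin⟩ := ((cons_isCycle_iff q h).mp hc.isCycle)
    rw [edges_cons, List.mem_cons] at hmem
    rcases hmem with heq | hmem
    · -- first edge is u–v, i.e. z = v
      have hz : v = z := by
        rwa [Sym2.congr_right] at heq
      subst hz
      refine ⟨q, hq_path, hcount, ?_, ?_⟩
      · intro e he hne
        rw [edges_cons, List.mem_cons] at he
        rcases he with rfl | he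
        · exact absurd heq.symm hne
        · exact he
      · intro e he
        refine ⟨by rw [edges_cons]; exact List.mem_cons_of_mem _ he, ?_⟩
        rintro rfl
        exact h_uz_notin (heq ▸ he)
    · -- the edge u–v is inside q; it must be the last edge of q
      have hmem' : s(v, u) ∈ q.edges := by rwa [Sym2.eq_swap] at hmem
      obtain ⟨q', h', rfl⟩ := q.eq_append_cons_of_mem_edges hnd hmem'
      have hqsup : (q'.append (Walk.cons h' Walk.nil)).support = q'.support ++ [u] := by
        rw [support_append]; rfl
      have hnd' : (Walk.cons h q').support.Nodup := by
        rw [hqsup] at hnd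
        rw [support_cons, List.nodup_cons]
        obtain ⟨h1, h2, h3⟩ := List.nodup_append'.mp hnd
        exact ⟨fun hu => h3 hu (by simp), h1⟩
      refine ⟨(Walk.cons h q').reverse, (IsPath.mk' hnd').reverse, ?_, ?_, ?_⟩
      · intro y
        rw [support_reverse, List.mem_reverse, support_cons, List.mem_cons]
        have := hcount y
        rw [hqsup, List.mem_append] at this
        rcases this with h' | h'
        · exact Or.inr h'
        · exact Or.inl (by simpa using h')
      · intro e he hne
        rw [edges_cons, List.mem_cons, edges_append, List.mem_append] at he
        rw [edges_reverse, List.mem_reverse, edges_cons, List.mem_cons]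
        rcases he with rfl | he | he
        · exact Or.inl rfl
        · exact Or.inr he
        · simp only [edges_cons, edges_nil, List.mem_singleton] at he
          exact absurd (he.trans (Sym2.eq_swap)) hne
      · intro e he
        rw [edges_reverse, List.mem_reverse, edges_cons, List.mem_cons] at he
        have hnodup : (Walk.cons h (q'.append (Walk.cons h' Walk.nil))).edges.Nodup :=
          hc.isCycle.1.1.edges_nodup
        rw [edges_cons, edges_append] at hnodup
        simp only [edges_cons, edges_nil] at hnodup
        have hvu_once : s(v, u) ∉ (s(u, z) :: q'.edges) := by
          rw [List.nodup_cons, List.nodup_append'] at hnodup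
          intro hcon
          rcases List.mem_cons.mp hcon with heq2 | hcon'
          · exact hnodup.1 (by rw [← heq2]; simp)
          · exact hnodup.2.2.2 hcon' (by simp)
        constructor
        · rw [edges_cons, List.mem_cons, edges_append, List.mem_append]
          rcases he with rfl | he
          · exact Or.inl rfl
          · exact Or.inr (Or.inl he)
        · rintro rfl
          apply hvu_once
          have hswap : s(v, u) = s(u, v) := Sym2.eq_swap
          rw [hswap]
          exact List.mem_cons.mpr he
  
end SimpleGraph.Walk

section KEY
open Finset
variable {n ℓ : ℕ}

lemma key_rotation (G : SimpleGraph (Fin n)) [DecidableRel G.Adj] (u v : Fin n)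
    (huv : u ≠ v) (hadj : ¬ G.Adj u v) (hdeg : n + ℓ ≤ G.degree u + G.degree v)
    (F : SimpleGraph (Fin n)) (hF : F ≤ G) (hFcard : F.edgeSet.ncard = ℓ)
    (P : G.Walk v u) (hPpath : P.IsPath) (hPsup : ∀ y, y ∈ P.support)
    (hFP : ∀ e ∈ F.edgeSet, e ∈ P.edges) :
    ∃ (w : Fin n) (c : G.Walk w w), c.IsHamiltonianCycle ∧ ∀ e ∈ F.edgeSet, e ∈ c.edges := by
  classical
  have hham : P.IsHamiltonian := hPpath.isHamiltonian_of_mem hPsup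
  have hlen : P.length = n - 1 := by rw [hham.length_eq, Fintype.card_fin]
  have hn : 2 ≤ n := by
    have : 1 < Fintype.card (Fin n) := Fintype.one_lt_card_iff_nontrivial.mpr ⟨u, v, huv⟩
    simp at this; omega
  set A : Finset ℕ := (range P.length).filter (fun i => G.Adj u (P.getVert i)) with hA
  set B : Finset ℕ := (range P.length).filter (fun i => G.Adj v (P.getVert (i+1))) with hB
  set Cs : Finset ℕ :=
    (range P.length).filter (fun i => s(P.getVert i, P.getVert (i+1)) ∈ F.edgeSet) with hCs
  have hnd := hPpath.support_nodup
  have hAcard : A.card = G.degree u := by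
    rw [← card_neighborFinset_eq_degree]
    apply Finset.card_bij (fun i _ => P.getVert i)
    · intro i hi
      rw [hA, mem_filter] at hi
      exact (G.mem_neighborFinset u _).mpr hi.2
    · intro i hi j hj hij
      rw [hA, mem_filter, mem_range] at hi hj
      exact SimpleGraph.Walk.getVert_injOn_of_nodup hnd hi.1.le hj.1.le hij
    · intro w hw
      have hadj' : G.Adj u w := (G.mem_neighborFinset u w).mp hw
      obtain ⟨i, hgi, hile⟩ := SimpleGraph.Walk.mem_support_iff_exists_getVert.mp (hPsup w)
      have hine : i ≠ P.length := by
        rintro rfl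
        rw [P.getVert_length] at hgi
        exact hadj'.ne (hgi ▸ rfl)
      exact ⟨i, by rw [hA, mem_filter, mem_range]; exact ⟨lt_of_le_of_ne hile hine, hgi ▸ hadj'⟩,
        hgi⟩
  have hBcard : B.card = G.degree v := by
    rw [← card_neighborFinset_eq_degree]
    apply Finset.card_bij (fun i _ => P.getVert (i+1))
    · intro i hi
      rw [hB, mem_filter] at hi
      exact (G.mem_neighborFinset v _).mpr hi.2
    · intro i hi j hj hij
      rw [hB, mem_filter, mem_range] at hi hj
      have := SimpleGraph.Walk.getVert_injOn_of_nodup hnd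
        (Nat.succ_le_of_lt hi.1) (Nat.succ_le_of_lt hj.1) hij
      omega
    · intro w hw
      have hadj' : G.Adj v w := (G.mem_neighborFinset v w).mp hw
      obtain ⟨j, hgj, hjle⟩ := SimpleGraph.Walk.mem_support_iff_exists_getVert.mp (hPsup w)
      have hjne : j ≠ 0 := by
        rintro rfl
        rw [P.getVert_zero] at hgj
        exact hadj'.ne (hgj ▸ rfl)
      have hj1 : j - 1 + 1 = j := by omega
      refine ⟨j - 1, ?_, ?_⟩
      · rw [hB, mem_filter, mem_range, hj1]
        exact ⟨by omega, hgj ▸ hadj'⟩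
      · rw [hj1]; exact hgj
  have hCcard : Cs.card ≤ ℓ := by
    have hfin : F.edgeSet.Finite := Set.toFinite _
    have hmap : ∀ i ∈ Cs, s(P.getVert i, P.getVert (i+1)) ∈ hfin.toFinset := by
      intro i hi
      rw [hCs, mem_filter] at hi
      exact hfin.mem_toFinset.mpr hi.2
    have hinj : Set.InjOn (fun i => s(P.getVert i, P.getVert (i+1))) Cs := by
      intro i hi j hj hij
      rw [hCs, Finset.coe_filter, Set.mem_setOf_eq, mem_range] at hi hj
      simp only [Sym2.eq_iff] at hij
      rcases hij with ⟨h1, _⟩ | ⟨h1, h2⟩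
      · exact SimpleGraph.Walk.getVert_injOn_of_nodup hnd hi.1.le hj.1.le h1
      · have e1 := SimpleGraph.Walk.getVert_injOn_of_nodup hnd hi.1.le
          (Nat.succ_le_of_lt hj.1) h1
        have e2 := SimpleGraph.Walk.getVert_injOn_of_nodup hnd
          (Nat.succ_le_of_lt hi.1) hj.1.le h2
        omega
    calc Cs.card ≤ hfin.toFinset.card := Finset.card_le_card_of_injOn _ hmap hinj
    _ = ℓ := by rw [← Set.ncard_eq_toFinset_card _ hfin, hFcard]
  have hABcard : ℓ + 1 ≤ (A ∩ B).card := by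
    have hsub : A ∪ B ⊆ range P.length := by
      apply Finset.union_subset <;> exact filter_subset _ _
    have h1 : (A ∪ B).card ≤ P.length := le_of_le_of_eq (card_le_card hsub) (card_range _)
    have h2 := Finset.card_union_add_card_inter A B
    omega
  have hex : ∃ i, i ∈ (A ∩ B) \ Cs := by
    apply Finset.card_pos.mp
    have := Finset.le_card_sdiff Cs (A ∩ B)
    omega
  obtain ⟨i, hi⟩ := hex
  rw [Finset.mem_sdiff, Finset.mem_inter, hA, hB, hCs, mem_filter, mem_filter, mem_filter,
    mem_range] at hi
  obtain ⟨⟨⟨him, hiu⟩, _, hiv⟩, hiC'⟩ := hi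
  have hiC : s(P.getVert i, P.getVert (i+1)) ∉ F.edgeSet := fun hc => hiC' ⟨him, hc⟩
  obtain ⟨x, P1, P2, hsplit, hlen1, hx⟩ := P.exists_split i him.le
  cases P2 with
  | nil =>
    rw [← hx] at hiu
    exact absurd hiu (G.irrefl)
  | @cons _ z _ h23 P3 =>
    have hz : z = P.getVert (i + 1) := by
      conv_rhs => rw [← hsplit]
      rw [SimpleGraph.Walk.getVert_append, if_neg (by omega), hlen1]
      have : i + 1 - i = 1 := by omega
      rw [this, SimpleGraph.Walk.getVert_cons_succ, SimpleGraph.Walk.getVert_zero]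
    subst hx
    subst hz
    have hPsupp : P.support = P1.support ++ P3.support := by
      conv_lhs => rw [← hsplit]
      rw [SimpleGraph.Walk.support_append, SimpleGraph.Walk.support_cons, List.tail_cons]
    have hPedges : P.edges = P1.edges ++ (s(P.getVert i, P.getVert (i+1)) :: P3.edges) := by
      conv_lhs => rw [← hsplit]
      rw [SimpleGraph.Walk.edges_append, SimpleGraph.Walk.edges_cons]
    rw [hPsupp, List.nodup_append'] at hnd
    obtain ⟨hnd1, hnd3, hdisj⟩ := hnd
    set Q : G.Walk (P.getVert i) u := P1.reverse.append (SimpleGraph.Walk.cons hiv P3) with hQ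
    have hQsup : Q.support = P1.support.reverse ++ P3.support := by
      rw [hQ, SimpleGraph.Walk.support_append, SimpleGraph.Walk.support_reverse,
        SimpleGraph.Walk.support_cons, List.tail_cons]
    have hQnd : Q.support.Nodup := by
      rw [hQsup, List.nodup_append]
      exact ⟨List.nodup_reverse.mpr hnd1, hnd3, fun a ha b hb hab => hdisj (List.mem_reverse.mp ha) (hab ▸ hb)⟩
    have hQedges : Q.edges = P1.edges.reverse ++ (s(v, P.getVert (i+1)) :: P3.edges) := by
      rw [hQ, SimpleGraph.Walk.edges_append, SimpleGraph.Walk.edges_reverse,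
        SimpleGraph.Walk.edges_cons]
    have hnotin : s(u, P.getVert i) ∉ Q.edges := by
      rw [hQedges]
      intro hmem
      rcases List.mem_append.mp hmem with hmem | hmem
      · exact hdisj (P1.fst_mem_support_of_mem_edges (List.mem_reverse.mp hmem))
          P3.end_mem_support
      · rcases List.mem_cons.mp hmem with heq | hmem
        · rw [Sym2.eq_iff] at heq
          rcases heq with ⟨h1, _⟩ | ⟨_, h2⟩
          · exact huv h1
          · exact hadj (h2 ▸ hiu)
        · exact hdisj P1.end_mem_support (P3.snd_mem_support_of_mem_edges hmem)
    have hcycle : (SimpleGraph.Walk.cons hiu Q).IsCycle :=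
      (SimpleGraph.Walk.cons_isCycle_iff Q hiu).mpr ⟨SimpleGraph.Walk.IsPath.mk' hQnd, hnotin⟩
    refine ⟨u, SimpleGraph.Walk.cons hiu Q, ?_, ?_⟩
    · rw [SimpleGraph.Walk.isHamiltonianCycle_iff_isCycle_and_support_count_tail_eq_one]
      refine ⟨hcycle, fun a => ?_⟩
      rw [SimpleGraph.Walk.support_cons, List.tail_cons]
      apply List.count_eq_one_of_mem hQnd
      have := hPsup a
      rw [hPsupp, List.mem_append] at this
      rw [hQsup, List.mem_append, List.mem_reverse]
      tauto
    · intro e he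
      have heP := hFP e he
      rw [hPedges, List.mem_append, List.mem_cons] at heP
      rw [SimpleGraph.Walk.edges_cons, List.mem_cons, hQedges, List.mem_append, List.mem_cons,
        List.mem_reverse]
      rcases heP with h1 | h1 | h1
      · tauto
      · exact absurd (h1 ▸ he) hiC
      · tauto

end KEY

/-- If `G` is not `ℓ`-hamiltonian and `u, v` are nonadjacent vertices with
`deg u + deg v ≥ n + ℓ`, then `G + uv` is not `ℓ`-hamiltonian either. -/
theorem addEdge_not_lHamiltonian {n ℓ : ℕ} (G : SimpleGraph (Fin n)) [DecidableRel G.Adj]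
    (hham : ¬ G.IsLHamiltonian ℓ) (u v : Fin n) (huv : u ≠ v) (hadj : ¬ G.Adj u v)
    (hdeg : n + ℓ ≤ G.degree u + G.degree v) :
    ¬ (G ⊔ SimpleGraph.edge u v).IsLHamiltonian ℓ := by
  intro h
  apply hham
  intro F hF hFlin hFcard
  classical
  have hF' : F ≤ G ⊔ SimpleGraph.edge u v := le_trans hF le_sup_left
  obtain ⟨w, c, hc, hFc⟩ := h F hF' hFlin hFcard
  have hedgeG' : (G ⊔ SimpleGraph.edge u v).edgeSet = G.edgeSet ∪ {s(u, v)} := by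
    rw [edgeSet_sup, edge_edgeSet_of_ne huv]
  have hsuv : s(u, v) ∉ G.edgeSet := by simpa [SimpleGraph.mem_edgeSet] using hadj
  have hFsub : ∀ e ∈ F.edgeSet, e ∈ G.edgeSet := fun e he => edgeSet_mono hF he
  by_cases hmem : s(u, v) ∈ c.edges
  · have husup : u ∈ c.support := hc.mem_support u
    set c' := c.rotate u husup with hc'def
    have hrot_e : c'.edges ~r c.edges := c.rotate_edges u husup
    have hc' : c'.IsHamiltonianCycle := by
      rw [Walk.isHamiltonianCycle_iff_isCycle_and_support_count_tail_eq_one]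
      refine ⟨hc.isCycle.rotate husup, fun a => ?_⟩
      have hperm : c'.support.tail ~r c.support.tail := c.support_rotate u husup
      rw [hperm.perm.count_eq]
      exact (Walk.isHamiltonianCycle_iff_isCycle_and_support_count_tail_eq_one.mp hc).2 a
    have hmem' : s(u, v) ∈ c'.edges := hrot_e.perm.mem_iff.mpr hmem
    obtain ⟨P0, hP0path, hP0sup, hP0e1, hP0e2⟩ :=
      Walk.exists_hamPath_of_hamCycle huv c' hc' hmem'
    have hP0G : ∀ e ∈ P0.edges, e ∈ G.edgeSet := by
      intro e he
      obtain ⟨hec, hene⟩ := hP0e2 e he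
      have h' := c'.edges_subset_edgeSet hec
      rw [hedgeG', Set.mem_union] at h'
      rcases h' with h' | h'
      · exact h'
      · exact absurd (Set.mem_singleton_iff.mp h') hene
    refine key_rotation G u v huv hadj hdeg F hF hFcard (P0.transfer G hP0G)
      (hP0path.transfer hP0G) ?_ ?_
    · intro y
      rw [Walk.support_transfer]
      exact hP0sup y
    · intro e he
      rw [Walk.edges_transfer]
      refine hP0e1 e (hrot_e.perm.mem_iff.mpr (hFc e he)) ?_
      rintro rfl
      exact hsuv (hFsub _ he)
  · have hsub : ∀ e ∈ c.edges, e ∈ G.edgeSet := by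
      intro e he
      have h' := c.edges_subset_edgeSet he
      rw [hedgeG', Set.mem_union] at h'
      rcases h' with h' | h'
      · exact h'
      · exact absurd (Set.mem_singleton_iff.mp h' ▸ he) hmem
    refine ⟨w, c.transfer G hsub, ?_, ?_⟩
    · rw [Walk.isHamiltonianCycle_iff_isCycle_and_support_count_tail_eq_one]
      refine ⟨hc.isCycle.transfer hsub, fun a => ?_⟩
      rw [Walk.support_transfer]
      exact (Walk.isHamiltonianCycle_iff_isCycle_and_support_count_tail_eq_one.mp hc).2 a
    · intro e he
      rw [Walk.edges_transfer]
      exact hFc e he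
end
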